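/- arXiv:1201.5495 — 11 statements merged into one kernel-verified Lean document; each statement's English description precedes it below -/
import Mathlib

section
/- Let (P, ≤) be an upwards linear partial order, a, c ∈ P and b, d ∈ P ∪ {∞} with a ≤ b and c ≤ d. If the intervals [a, b) and [c, d) are branching free and not disjoint, then a and c are comparable, and b and d are comparable (in P ∪ {∞}). -/
universe u

/-- The interval `[p₁, p₂)`, where the right endpoint may be `∞` (i.e. `⊤` in `WithTop P`). -/
def Ival {P : Type u} [PartialOrder P] (p₁ : P) (p₂ : WithTop P) : Set P :=
  {p : P | p₁ ≤ p ∧ (p : WithTop P) < p₂}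

/-- The interval `[p₁, p₂)` is branching free: for every `p ∈ [p₁, p₂)` and every `x < p`,
the elements `x` and `p₁` are comparable. -/
def BranchingFree {P : Type u} [PartialOrder P] (p₁ : P) (p₂ : WithTop P) : Prop :=
  ∀ p ∈ Ival p₁ p₂, ∀ x : P, x < p → x ≤ p₁ ∨ p₁ ≤ x

/-- A partial order is upwards linear if for every `p` the set `{x | p < x}` is linearly
ordered. -/
def UpwardsLinear (P : Type u) [PartialOrder P] : Prop :=
  ∀ p x y : P, p < x → p < y → x ≤ y ∨ y ≤ x

/-- In an upwards linear partial order, if the branching free intervals `[a, b)` and `[c, d)`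
are not disjoint, then `a` and `c` are comparable, and `b` and `d` are comparable. -/
theorem comparable_of_branchingFree_not_disjoint {P : Type u} [PartialOrder P]
    (hul : UpwardsLinear P) (a c : P) (b d : WithTop P)
    (hab : (a : WithTop P) ≤ b) (hcd : (c : WithTop P) ≤ d)
    (hbf₁ : BranchingFree a b) (hbf₂ : BranchingFree c d)
    (hnd : (Ival a b ∩ Ival c d).Nonempty) :
    (a ≤ c ∨ c ≤ a) ∧ (b ≤ d ∨ d ≤ b) := by
  obtain ⟨p, ⟨hap, hpb⟩, ⟨hcp, hpd⟩⟩ := hnd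
  constructor
  · rcases hcp.lt_or_eq with hlt | rfl
    · exact (hbf₁ p ⟨hap, hpb⟩ c hlt).symm
    · exact Or.inl hap
  · cases b with
    | top => exact Or.inr le_top
    | coe b' =>
      cases d with
      | top => exact Or.inl le_top
      | coe d' =>
        have h1 : p < b' := by exact_mod_cast hpb
        have h2 : p < d' := by exact_mod_cast hpd
        rcases hul p b' d' h1 h2 with h | h
        · exact Or.inl (by exact_mod_cast h)
        · exact Or.inr (by exact_mod_cast h)
end

section
/- Let (P, ≤) be an upwards linear partial order, a, c ∈ P and b, d ∈ P ∪ {∞} with a ≤ b and c ≤ d. If the intervals [a, b) and [c, d) are maximal branching free, then they are either disjoint or equal. -/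
universe u

/-- `[p₁, p₂)` is a maximal branching free interval: it is branching free and maximal with
respect to set inclusion among the branching free intervals. -/
def MaxBranchingFree {P : Type u} [PartialOrder P] (p₁ : P) (p₂ : WithTop P) : Prop :=
  (p₁ : WithTop P) ≤ p₂ ∧ BranchingFree p₁ p₂ ∧
    ∀ (q₁ : P) (q₂ : WithTop P), (q₁ : WithTop P) ≤ q₂ → BranchingFree q₁ q₂ →
      Ival p₁ p₂ ⊆ Ival q₁ q₂ → Ival p₁ p₂ = Ival q₁ q₂

lemma maxBranchingFree_key {P : Type u} [PartialOrder P]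
    (hul : UpwardsLinear P) {a c : P} {b d : WithTop P}
    (hm₁ : MaxBranchingFree a b) (hm₂ : MaxBranchingFree c d)
    (hac : a ≤ c) {p : P} (hp₁ : p ∈ Ival a b) (hp₂ : p ∈ Ival c d) :
    Ival a b = Ival c d := by
  have hbd : b ≤ d ∨ d ≤ b := by
    cases b with
    | top => exact Or.inr le_top
    | coe b' =>
      cases d with
      | top => exact Or.inl le_top
      | coe d' =>
        have h1 : p < b' := WithTop.coe_lt_coe.mp hp₁.2
        have h2 : p < d' := WithTop.coe_lt_coe.mp hp₂.2
        rcases hul p b' d' h1 h2 with h | h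
        · exact Or.inl (WithTop.coe_le_coe.mpr h)
        · exact Or.inr (WithTop.coe_le_coe.mpr h)
  obtain ⟨e, hbe, hde, he⟩ : ∃ e : WithTop P, b ≤ e ∧ d ≤ e ∧ (e = b ∨ e = d) := by
    rcases hbd with h | h
    · exact ⟨d, h, le_refl _, Or.inr rfl⟩
    · exact ⟨b, le_refl _, h, Or.inl rfl⟩
  have hBF : BranchingFree a e := by
    intro q hq x hx
    by_cases hqb : (q : WithTop P) < b
    · exact hm₁.2.1 q ⟨hq.1, hqb⟩ x hx
    · have hed : e = d := by
        rcases he with h | h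
        · exact absurd (h ▸ hq.2) hqb
        · exact h
      have hpq : p ≤ q := by
        rcases eq_or_lt_of_le hp₁.1 with h | h
        · exact h ▸ hq.1
        · rcases eq_or_lt_of_le hq.1 with h' | h'
          · exact absurd (lt_of_le_of_lt (WithTop.coe_le_coe.mpr (h' ▸ hp₁.1)) hp₁.2) hqb
          · rcases hul a q p h' h with h2 | h2
            · exact absurd (lt_of_le_of_lt (WithTop.coe_le_coe.mpr h2) hp₁.2) hqb
            · exact h2
      have hq' : q ∈ Ival c d := ⟨le_trans hp₂.1 hpq, hed ▸ hq.2⟩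
      rcases hm₂.2.1 q hq' x hx with h | h
      · rcases eq_or_lt_of_le (le_trans h hp₂.1) with h2 | h2
        · exact Or.inr (by rw [h2]; exact le_trans hac hp₂.1)
        · exact hm₁.2.1 p hp₁ x h2
      · exact Or.inr (le_trans hac h)
  have hae : (a : WithTop P) ≤ e := le_trans hm₁.1 hbe
  have h1 : Ival a b ⊆ Ival a e := fun r hr => ⟨hr.1, lt_of_lt_of_le hr.2 hbe⟩
  have h2 : Ival c d ⊆ Ival a e := fun r hr => ⟨le_trans hac hr.1, lt_of_lt_of_le hr.2 hde⟩
  have e1 := hm₁.2.2 a e hae hBF h1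
  have e2 := hm₂.2.2 a e hae hBF h2
  rw [e1, e2]

/-- In an upwards linear partial order, two maximal branching free intervals `[a, b)` and
`[c, d)` are either disjoint or equal. -/
theorem maxBranchingFree_disjoint_or_eq {P : Type u} [PartialOrder P]
    (hul : UpwardsLinear P) (a c : P) (b d : WithTop P)
    (hab : (a : WithTop P) ≤ b) (hcd : (c : WithTop P) ≤ d)
    (hm₁ : MaxBranchingFree a b) (hm₂ : MaxBranchingFree c d) :
    Ival a b ∩ Ival c d = ∅ ∨ Ival a b = Ival c d := by
  by_cases h : Ival a b ∩ Ival c d = ∅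
  · exact Or.inl h
  right
  obtain ⟨p, hp₁, hp₂⟩ := Set.nonempty_iff_ne_empty.mpr h
  have hcomp : a ≤ c ∨ c ≤ a := by
    rcases eq_or_lt_of_le hp₂.1 with h' | h'
    · exact Or.inl (h' ▸ hp₁.1)
    · rcases hm₁.2.1 p hp₁ c h' with h2 | h2
      · exact Or.inr h2
      · exact Or.inl h2
  rcases hcomp with hac | hca
  · exact maxBranchingFree_key hul hm₁ hm₂ hac hp₁ hp₂
  · exact (maxBranchingFree_key hul hm₂ hm₁ hca hp₂ hp₁).symm
end

section
/- Let P be a wulpo (well-founded upwards linear partial order). Then every element p ∈ P is contained in a maximal branching free interval, and this interval is unique: any two maximal branching free intervals containing p coincide. -/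
universe u

/-- The set of points above `a` all of whose strict predecessors are comparable with `a`. -/
def Gset {P : Type u} [PartialOrder P] (a : P) : Set P :=
  {q | a ≤ q ∧ ∀ x, x < q → x ≤ a ∨ a ≤ x}

lemma chain_above {P : Type u} [PartialOrder P] (hul : UpwardsLinear P)
    {a x y : P} (hx : a ≤ x) (hy : a ≤ y) : x ≤ y ∨ y ≤ x := by
  rcases eq_or_lt_of_le hx with rfl | hx'
  · exact Or.inl hy
  rcases eq_or_lt_of_le hy with rfl | hy'
  · exact Or.inr hx'.le
  exact hul a x y hx' hy'

lemma Gset_dc {P : Type u} [PartialOrder P] {a q r : P}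
    (hq : q ∈ Gset a) (h1 : a ≤ r) (h2 : r ≤ q) : r ∈ Gset a :=
  ⟨h1, fun x hx => hq.2 x (hx.trans_le h2)⟩

lemma exists_ival_eq_Gset {P : Type u} [PartialOrder P] [WellFoundedLT P]
    (hul : UpwardsLinear P) (a : P) : ∃ b : WithTop P, Ival a b = Gset a := by
  by_cases h : ∀ q, a ≤ q → q ∈ Gset a
  · exact ⟨⊤, Set.ext fun q =>
      ⟨fun hq => h q hq.1, fun hq => ⟨hq.1, WithTop.coe_lt_top q⟩⟩⟩
  push_neg at h
  obtain ⟨q₁, hq₁, hq₁n⟩ := h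
  obtain ⟨q₀, hq₀, hmin⟩ := (wellFounded_lt (α := P)).has_min
    {q | a ≤ q ∧ q ∉ Gset a} ⟨q₁, hq₁, hq₁n⟩
  refine ⟨(q₀ : WithTop P), Set.ext fun q => ?_⟩
  constructor
  · rintro ⟨h1, h2⟩
    rw [WithTop.coe_lt_coe] at h2
    by_contra hq
    exact hmin q ⟨h1, hq⟩ h2
  · intro hq
    rcases chain_above hul hq.1 hq₀.1 with h | h
    · rcases eq_or_lt_of_le h with rfl | h'
      · exact absurd hq hq₀.2
      · exact ⟨hq.1, WithTop.coe_lt_coe.2 h'⟩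
    · exact absurd (Gset_dc hq hq₀.1 h) hq₀.2

/-- In a wulpo (well-founded upwards linear partial order), every element is contained in a
maximal branching free interval, and any two maximal branching free intervals containing it
coincide. -/
theorem mem_unique_maxBranchingFree {P : Type u} [PartialOrder P] [WellFoundedLT P]
    (hul : UpwardsLinear P) (p : P) :
    (∃ (p₁ : P) (p₂ : WithTop P), MaxBranchingFree p₁ p₂ ∧ p ∈ Ival p₁ p₂) ∧
    (∀ (a c : P) (b d : WithTop P), MaxBranchingFree a b → MaxBranchingFree c d →
      p ∈ Ival a b → p ∈ Ival c d → Ival a b = Ival c d) := by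
  classical
  set S : Set P := {a | a ≤ p ∧ ∀ x, x < p → x ≤ a ∨ a ≤ x} with hSdef
  have hpS : p ∈ S := ⟨le_refl p, fun x hx => Or.inl hx.le⟩
  obtain ⟨a₀, ha₀S, hmin⟩ := (wellFounded_lt (α := P)).has_min S ⟨p, hpS⟩
  have hleast : ∀ a ∈ S, a₀ ≤ a := by
    intro a haS
    rcases eq_or_lt_of_le haS.1 with rfl | hap
    · exact ha₀S.1
    rcases ha₀S.2 a hap with h | h
    · rcases eq_or_lt_of_le h with rfl | h'
      · exact le_refl _
      · exact absurd h' (hmin a haS)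
    · exact h
  obtain ⟨b₀, hb₀⟩ := exists_ival_eq_Gset hul a₀
  have hpG : p ∈ Ival a₀ b₀ := by rw [hb₀]; exact ⟨ha₀S.1, ha₀S.2⟩
  have ha₀G : a₀ ∈ Ival a₀ b₀ := by
    rw [hb₀]; exact ⟨le_refl _, fun x hx => Or.inl hx.le⟩
  have hBF : BranchingFree a₀ b₀ := by
    intro q hq x hx
    rw [hb₀] at hq
    exact hq.2 x hx
  have ha₀le : (a₀ : WithTop P) ≤ b₀ := ha₀G.2.le
  -- key sublemma
  have hsub : ∀ (a : P) (b : WithTop P), BranchingFree a b → p ∈ Ival a b →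
      a ∈ S ∧ Ival a b ⊆ Ival a₀ b₀ := by
    intro a b hBFab hp
    have haS : a ∈ S := ⟨hp.1, fun x hx => hBFab p hp x hx⟩
    refine ⟨haS, ?_⟩
    intro r hr
    rw [hb₀]
    refine ⟨(hleast a haS).trans hr.1, ?_⟩
    intro x hx
    rcases hBFab r hr x hx with h | h
    · rcases eq_or_lt_of_le (h.trans haS.1) with hxp | hxp
      · exact Or.inr (hxp ▸ ha₀S.1)
      · exact ha₀S.2 x hxp
    · exact Or.inr ((hleast a haS).trans h)
  have hmax : MaxBranchingFree a₀ b₀ := by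
    refine ⟨ha₀le, hBF, ?_⟩
    intro q₁ q₂ hq hBFq hsubs
    obtain ⟨hq₁S, hsub2⟩ := hsub q₁ q₂ hBFq (hsubs hpG)
    exact Set.Subset.antisymm hsubs hsub2
  have huniq : ∀ (a : P) (b : WithTop P), MaxBranchingFree a b → p ∈ Ival a b →
      Ival a b = Ival a₀ b₀ := by
    intro a b hM hp
    exact hM.2.2 a₀ b₀ ha₀le hBF (hsub a b hM.2.1 hp).2
  refine ⟨⟨a₀, b₀, hmax, hpG⟩, ?_⟩
  intro a c b d hab hcd hpa hpc
  rw [huniq a b hab hpa, huniq c d hcd hpc]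
end

section
/- Let P be a wulpo (well-founded upwards linear partial order) and let I ≠ J be two distinct maximal branching free intervals of P. For all p₁ ∈ I and p₂ ∈ J with p₁ < p₂, there exists p ∈ P such that p < p₂ and p is incomparable to p₁. -/
universe u

/-- In a wulpo, if `[a, b)` and `[c, d)` are two distinct maximal branching free intervals,
`p₁ ∈ [a, b)`, `p₂ ∈ [c, d)` and `p₁ < p₂`, then there is some `p < p₂` incomparable
to `p₁`. -/
theorem separation_of_maxBranchingFree {P : Type u} [PartialOrder P] [WellFoundedLT P]
    (hul : UpwardsLinear P)
    (a c : P) (b d : WithTop P) (hI : MaxBranchingFree a b) (hJ : MaxBranchingFree c d)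
    (hne : Ival a b ≠ Ival c d) (p₁ p₂ : P) (hp₁ : p₁ ∈ Ival a b) (hp₂ : p₂ ∈ Ival c d)
    (hlt : p₁ < p₂) :
    ∃ p : P, p < p₂ ∧ ¬ p ≤ p₁ ∧ ¬ p₁ ≤ p := by
  by_contra hcon
  push_neg at hcon
  have H : ∀ x : P, x < p₂ → x ≤ p₁ ∨ p₁ ≤ x := by
    intro x hx
    by_cases h : x ≤ p₁
    · exact Or.inl h
    · exact Or.inr (hcon x hx h)
  obtain ⟨hap₁, hp₁b⟩ := hp₁
  obtain ⟨hcp₂, hp₂d⟩ := hp₂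
  have hp₁p₂ : (p₁ : WithTop P) < (p₂ : WithTop P) := WithTop.coe_lt_coe.mpr hlt
  have hp₁d : (p₁ : WithTop P) < d := hp₁p₂.trans hp₂d
  have hc : p₁ ≤ c ∨ c ≤ p₁ := hJ.2.1 p₂ ⟨hcp₂, hp₂d⟩ p₁ hlt
  have key₁ : ∀ x : P, x ≤ p₁ → x ≤ a ∨ a ≤ x := by
    intro x hxp₁
    rcases eq_or_lt_of_le hxp₁ with rfl | h
    · exact Or.inr hap₁
    · exact hI.2.1 p₁ ⟨hap₁, hp₁b⟩ x h
  have key₂ : ∀ x : P, x < p₂ → x ≤ a ∨ a ≤ x := by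
    intro x hx
    rcases H x hx with h | h
    · exact key₁ x h
    · exact Or.inr (hap₁.trans h)
  have hcmp : b ≤ d ∨ d ≤ b := by
    cases b with
    | top => exact Or.inr le_top
    | coe b' =>
      cases d with
      | top => exact Or.inl le_top
      | coe d' =>
        rcases hul p₁ b' d' (by exact_mod_cast hp₁b) (by exact_mod_cast hp₁d) with h | h
        · exact Or.inl (by exact_mod_cast h)
        · exact Or.inr (by exact_mod_cast h)
  have hac : a ≤ c ∨ c ≤ a := by
    rcases hc with h | h
    · exact Or.inl (hap₁.trans h)
    · rcases eq_or_lt_of_le h with rfl | h'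
      · exact Or.inl hap₁
      · exact (hI.2.1 p₁ ⟨hap₁, hp₁b⟩ c h').symm
  rcases hac with hac | hca
  · -- a ≤ c : extend J downwards to [a, d)
    have hBF : BranchingFree a d := by
      rintro p ⟨hap, hpd⟩ x hx
      rcases eq_or_lt_of_le hap with rfl | hap'
      · exact Or.inl hx.le
      have hap₂ : a < p₂ := lt_of_le_of_lt hap₁ hlt
      rcases hul a p p₂ hap' hap₂ with hpp₂ | hp₂p
      · exact key₂ x (lt_of_lt_of_le hx hpp₂)
      · have hpJ : p ∈ Ival c d := ⟨hcp₂.trans hp₂p, hpd⟩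
        rcases hJ.2.1 p hpJ x hx with hxc | hcx
        · rcases hc with hp₁c | hcp₁
          · rcases eq_or_lt_of_le hxc with rfl | hxc'
            · exact Or.inr (hap₁.trans hp₁c)
            · exact key₂ x (lt_of_lt_of_le hxc' hcp₂)
          · exact key₁ x (hxc.trans hcp₁)
        · exact Or.inr (hac.trans hcx)
    have had : (a : WithTop P) ≤ d := ((WithTop.coe_le_coe.mpr hap₁).trans hp₁d.le)
    have hJd : Ival c d = Ival a d :=
      hJ.2.2 a d had hBF (fun q hq => ⟨hac.trans hq.1, hq.2⟩)
    rcases hcmp with hbd | hdb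
    · exact hne ((hI.2.2 a d had hBF
        (fun q hq => ⟨hq.1, lt_of_lt_of_le hq.2 hbd⟩)).trans hJd.symm)
    · have : Ival c d = Ival a b := hJ.2.2 a b hI.1 hI.2.1 (by
        intro q hq
        rw [hJd] at hq
        exact ⟨hq.1, lt_of_lt_of_le hq.2 hdb⟩)
      exact hne this.symm
  · -- c ≤ a : extend I downwards to [c, b)
    have hcp₁ : c ≤ p₁ := hca.trans hap₁
    have key₁' : ∀ x : P, x ≤ p₁ → x ≤ c ∨ c ≤ x := by
      intro x hxp₁
      rcases eq_or_lt_of_le hxp₁ with rfl | h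
      · exact Or.inr hcp₁
      · exact hJ.2.1 p₁ ⟨hcp₁, hp₁d⟩ x h
    have key₂' : ∀ x : P, x < p₂ → x ≤ c ∨ c ≤ x := by
      intro x hx
      rcases H x hx with h | h
      · exact key₁' x h
      · exact Or.inr (hcp₁.trans h)
    have hBF' : BranchingFree c b := by
      rintro p ⟨hcp, hpb⟩ x hx
      rcases eq_or_lt_of_le hcp with rfl | hcp'
      · exact Or.inl hx.le
      have hcp₂' : c < p₂ := lt_of_le_of_lt hcp₁ hlt
      rcases hul c p p₂ hcp' hcp₂' with hpp₂ | hp₂p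
      · exact key₂' x (lt_of_lt_of_le hx hpp₂)
      · have hpI : p ∈ Ival a b := ⟨hap₁.trans (hlt.le.trans hp₂p), hpb⟩
        rcases hI.2.1 p hpI x hx with hxa | hax
        · exact key₁' x (hxa.trans hap₁)
        · exact Or.inr (hca.trans hax)
    have hcb : (c : WithTop P) ≤ b := ((WithTop.coe_le_coe.mpr hcp₁).trans hp₁b.le)
    have hIb : Ival a b = Ival c b :=
      hI.2.2 c b hcb hBF' (fun q hq => ⟨hca.trans hq.1, hq.2⟩)
    rcases hcmp with hbd | hdb
    · exact hne (hI.2.2 c d hJ.1 hJ.2.1 (by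
        intro q hq
        rw [hIb] at hq
        exact ⟨hq.1, lt_of_lt_of_le hq.2 hbd⟩))
    · have : Ival c d = Ival c b := hJ.2.2 c b hcb hBF'
        (fun q hq => ⟨hq.1, lt_of_lt_of_le hq.2 hdb⟩)
      exact hne (this.trans hIb.symm).symm
end

section
/- For all ordinals α, β, γ: (α ⊗ β) + (α ⊗ γ) ≤ α ⊗ (β + γ), where + is the usual ordinal sum and ⊗ is the natural (Hessenberg) product of ordinals. -/
namespace Ordinal

universe u

/-- Natural addition on ordinals (old Mathlib `Ordinal.nadd`). -/
noncomputable def nadd (a b : Ordinal.{u}) : Ordinal.{u} :=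
  max (⨆ x : Set.Iio a, Order.succ (nadd x.1 b)) (⨆ x : Set.Iio b, Order.succ (nadd a x.1))
termination_by (a, b)
decreasing_by
  · exact Prod.Lex.left _ _ x.2
  · exact Prod.Lex.right _ x.2

/-- Natural multiplication on ordinals (old Mathlib `Ordinal.nmul`). -/
noncomputable def nmul (a b : Ordinal.{u}) : Ordinal.{u} :=
  sInf {c | ∀ a' < a, ∀ b' < b, nadd (nmul a' b) (nmul a b') < nadd c (nmul a' b')}
termination_by (a, b)

end Ordinal

namespace NaturalOps

scoped infixl:65 " ♯ " => Ordinal.nadd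
scoped infixl:70 " ⨳ " => Ordinal.nmul

end NaturalOps

open NaturalOps


namespace Ordinal

theorem nadd_lt_nadd_left {b c : Ordinal} (h : b < c) (a : Ordinal) : a ♯ b < a ♯ c := by
  conv_rhs => rw [nadd]
  exact (Order.lt_succ _).trans_le ((Ordinal.le_iSup
    (fun x : Set.Iio c => Order.succ (nadd a x.1)) ⟨b, h⟩).trans (le_max_right _ _))

theorem nadd_lt_nadd_right {b c : Ordinal} (h : b < c) (a : Ordinal) : b ♯ a < c ♯ a := by
  conv_rhs => rw [nadd]
  exact (Order.lt_succ _).trans_le ((Ordinal.le_iSup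
    (fun x : Set.Iio c => Order.succ (nadd x.1 a)) ⟨b, h⟩).trans (le_max_left _ _))

theorem nadd_le_nadd_left {b c : Ordinal} (h : b ≤ c) (a : Ordinal) : a ♯ b ≤ a ♯ c := by
  rcases h.lt_or_eq with h | rfl
  · exact (nadd_lt_nadd_left h a).le
  · exact le_rfl

theorem nadd_le_nadd_right {b c : Ordinal} (h : b ≤ c) (a : Ordinal) : b ♯ a ≤ c ♯ a := by
  rcases h.lt_or_eq with h | rfl
  · exact (nadd_lt_nadd_right h a).le
  · exact le_rfl

theorem nadd_lt_nadd_iff_left (a : Ordinal) {b c : Ordinal} : a ♯ b < a ♯ c ↔ b < c :=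
  StrictMono.lt_iff_lt (fun _ _ h => nadd_lt_nadd_left h a)

theorem nadd_lt_nadd_iff_right (a : Ordinal) {b c : Ordinal} : b ♯ a < c ♯ a ↔ b < c :=
  StrictMono.lt_iff_lt (fun _ _ h => nadd_lt_nadd_right h a)

theorem nadd_le_iff {a b c : Ordinal} :
    b ♯ c ≤ a ↔ (∀ b' < b, b' ♯ c < a) ∧ ∀ c' < c, b ♯ c' < a := by
  refine ⟨fun H => ⟨fun b' h => (nadd_lt_nadd_right h c).trans_le H,
    fun c' h => (nadd_lt_nadd_left h b).trans_le H⟩, fun H => ?_⟩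
  rw [nadd]
  exact max_le (Ordinal.iSup_le fun x => Order.succ_le_of_lt (H.1 x.1 x.2))
    (Ordinal.iSup_le fun x => Order.succ_le_of_lt (H.2 x.1 x.2))

theorem lt_nadd_iff {a b c : Ordinal} :
    a < b ♯ c ↔ (∃ b' < b, a ≤ b' ♯ c) ∨ ∃ c' < c, a ≤ b ♯ c' := by
  rw [← not_le, nadd_le_iff]
  simp only [not_and_or, not_forall, not_lt, exists_prop]

theorem nadd_comm (a b : Ordinal) : a ♯ b = b ♯ a := by
  conv_lhs => rw [nadd]
  conv_rhs => rw [nadd]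
  rw [max_comm]
  congr 1
  · congr 1
    funext x
    rw [nadd_comm a x.1]
  · congr 1
    funext x
    rw [nadd_comm x.1 b]
termination_by (a, b)
decreasing_by
  · exact Prod.Lex.right _ x.2
  · exact Prod.Lex.left _ _ x.2

theorem nadd_zero (a : Ordinal) : a ♯ 0 = a := by
  refine le_antisymm (nadd_le_iff.2 ⟨fun b' h => ?_, fun c' h => absurd h (not_lt_zero)⟩)
    (le_of_forall_lt fun c h => ?_)
  · rw [nadd_zero b']; exact h
  · calc c = c ♯ 0 := (nadd_zero c).symm
      _ < a ♯ 0 := nadd_lt_nadd_right h 0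
termination_by a

theorem zero_nadd (a : Ordinal) : 0 ♯ a = a := by
  rw [nadd_comm, nadd_zero]

theorem nadd_succ (a b : Ordinal) : a ♯ Order.succ b = Order.succ (a ♯ b) := by
  refine le_antisymm (nadd_le_iff.2 ⟨fun a' h => ?_, fun c' h => ?_⟩)
    (Order.succ_le_of_lt (nadd_lt_nadd_left (Order.lt_succ b) a))
  · rw [nadd_succ a' b, Order.succ_lt_succ_iff]
    exact nadd_lt_nadd_right h b
  · exact Order.lt_succ_of_le (nadd_le_nadd_left (Order.le_of_lt_succ h) a)
termination_by a

theorem nadd_one (a : Ordinal) : a ♯ 1 = Order.succ a := by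
  rw [← Ordinal.succ_zero, nadd_succ, nadd_zero]

theorem nadd_assoc (a b c : Ordinal) : a ♯ b ♯ c = a ♯ (b ♯ c) := by
  refine le_antisymm (nadd_le_iff.2 ⟨fun d hd => ?_, fun c' hc => ?_⟩)
    (nadd_le_iff.2 ⟨fun a' ha => ?_, fun d hd => ?_⟩)
  · rcases lt_nadd_iff.1 hd with ⟨a', ha, h⟩ | ⟨b', hb, h⟩
    · calc d ♯ c ≤ a' ♯ b ♯ c := nadd_le_nadd_right h c
        _ = a' ♯ (b ♯ c) := nadd_assoc a' b c
        _ < a ♯ (b ♯ c) := nadd_lt_nadd_right ha _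
    · calc d ♯ c ≤ a ♯ b' ♯ c := nadd_le_nadd_right h c
        _ = a ♯ (b' ♯ c) := nadd_assoc a b' c
        _ < a ♯ (b ♯ c) := nadd_lt_nadd_left (nadd_lt_nadd_right hb c) a
  · rw [nadd_assoc a b c']
    exact nadd_lt_nadd_left (nadd_lt_nadd_left hc b) a
  · rw [← nadd_assoc a' b c]
    exact nadd_lt_nadd_right (nadd_lt_nadd_right ha b) c
  · rcases lt_nadd_iff.1 hd with ⟨b', hb, h⟩ | ⟨c', hc, h⟩
    · calc a ♯ d ≤ a ♯ (b' ♯ c) := nadd_le_nadd_left h a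
        _ = a ♯ b' ♯ c := (nadd_assoc a b' c).symm
        _ < a ♯ b ♯ c := nadd_lt_nadd_right (nadd_lt_nadd_left hb a) c
    · calc a ♯ d ≤ a ♯ (b ♯ c') := nadd_le_nadd_left h a
        _ = a ♯ b ♯ c' := (nadd_assoc a b c').symm
        _ < a ♯ b ♯ c := nadd_lt_nadd_left hc _
termination_by (a, b, c)

instance : Std.Associative (α := Ordinal) nadd := ⟨nadd_assoc⟩
instance : Std.Commutative (α := Ordinal) nadd := ⟨nadd_comm⟩

theorem nadd_left_comm (a b c : Ordinal) : a ♯ (b ♯ c) = b ♯ (a ♯ c) := by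
  rw [← nadd_assoc, nadd_comm a, nadd_assoc]

theorem nadd_right_comm (a b c : Ordinal) : a ♯ b ♯ c = a ♯ c ♯ b := by
  rw [nadd_assoc, nadd_comm b, ← nadd_assoc]

theorem nadd_lt_nadd_of_lt_of_le {a b c d : Ordinal} (h1 : a < b) (h2 : c ≤ d) : a ♯ c < b ♯ d :=
  (nadd_lt_nadd_right h1 c).trans_le (nadd_le_nadd_left h2 b)

theorem nadd_lt_nadd_of_le_of_lt {a b c d : Ordinal} (h1 : a ≤ b) (h2 : c < d) : a ♯ c < b ♯ d :=
  (nadd_le_nadd_right h1 c).trans_lt (nadd_lt_nadd_left h2 b)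

theorem add_le_nadd (a b : Ordinal) : a + b ≤ a ♯ b := by
  induction b using Ordinal.induction with
  | _ b IH =>
  refine le_of_forall_lt fun d hd => ?_
  rcases lt_or_ge d a with h | h
  · refine h.trans_le ?_
    have := nadd_le_nadd_left (zero_le : 0 ≤ b) a
    rwa [nadd_zero] at this
  · have e := Ordinal.add_sub_cancel_of_le h
    have hlt : d - a < b := by
      rw [← e] at hd
      exact (add_lt_add_iff_left a).1 hd
    calc d = a + (d - a) := e.symm
      _ ≤ a ♯ (d - a) := IH _ hlt
      _ < a ♯ b := nadd_lt_nadd_left hlt a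

theorem nmul_def (a b : Ordinal) :
    a ⨳ b = sInf {c | ∀ a' < a, ∀ b' < b, a' ⨳ b ♯ a ⨳ b' < c ♯ a' ⨳ b'} := by
  rw [nmul]

theorem nmul_nonempty (a b : Ordinal.{u}) :
    {c : Ordinal.{u} | ∀ a' < a, ∀ b' < b, a' ⨳ b ♯ a ⨳ b' < c ♯ a' ⨳ b'}.Nonempty := by
  refine ⟨⨆ p : Set.Iio a × Set.Iio b, Order.succ (p.1.1 ⨳ b ♯ a ⨳ p.2.1), fun a' ha b' hb => ?_⟩
  refine (Order.lt_succ _).trans_le ?_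
  refine (Ordinal.le_iSup (fun p : Set.Iio a × Set.Iio b => Order.succ (p.1.1 ⨳ b ♯ a ⨳ p.2.1))
    (⟨a', ha⟩, ⟨b', hb⟩)).trans ?_
  have := nadd_le_nadd_left (zero_le : 0 ≤ a' ⨳ b')
    (⨆ p : Set.Iio a × Set.Iio b, Order.succ (p.1.1 ⨳ b ♯ a ⨳ p.2.1))
  rwa [nadd_zero] at this

theorem nmul_nadd_lt {a a' b b' : Ordinal} (ha : a' < a) (hb : b' < b) :
    a' ⨳ b ♯ a ⨳ b' < a ⨳ b ♯ a' ⨳ b' := by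
  have := csInf_mem (nmul_nonempty a b)
  rw [← nmul_def a b] at this
  exact this a' ha b' hb

theorem lt_nmul_iff {a b c : Ordinal} :
    c < a ⨳ b ↔ ∃ a' < a, ∃ b' < b, c ♯ a' ⨳ b' ≤ a' ⨳ b ♯ a ⨳ b' := by
  refine ⟨fun h => ?_, fun ⟨a', ha, b', hb, h⟩ => ?_⟩
  · rw [nmul_def] at h
    have := notMem_of_lt_csInf h ⟨0, fun _ _ => zero_le⟩
    by_contra hc
    push_neg at hc
    exact this hc
  · exact (nadd_lt_nadd_iff_right _).1 (h.trans_lt (nmul_nadd_lt ha hb))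

theorem nmul_le_iff {a b c : Ordinal} :
    a ⨳ b ≤ c ↔ ∀ a' < a, ∀ b' < b, a' ⨳ b ♯ a ⨳ b' < c ♯ a' ⨳ b' := by
  rw [← not_lt, lt_nmul_iff]
  push_neg
  rfl

theorem nmul_zero (a : Ordinal) : a ⨳ 0 = 0 :=
  le_antisymm (nmul_le_iff.2 fun _ _ b' hb => absurd hb (not_lt_zero))
    (zero_le)

theorem zero_nmul (b : Ordinal) : 0 ⨳ b = 0 :=
  le_antisymm (nmul_le_iff.2 fun a' ha _ _ => absurd ha (not_lt_zero))
    (zero_le)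

theorem nmul_one (a : Ordinal) : a ⨳ 1 = a := by
  refine le_antisymm (nmul_le_iff.2 fun a' ha b' hb => ?_) (le_of_forall_lt fun c hc => ?_)
  · rw [Order.lt_one_iff] at hb
    subst hb
    rw [nmul_zero, nmul_zero, nadd_zero, nadd_zero, nmul_one a']
    exact ha
  · exact lt_nmul_iff.2 ⟨c, hc, 0, zero_lt_one, by
      rw [nmul_zero, nmul_zero, nadd_zero, nadd_zero, nmul_one c]⟩
termination_by a

theorem nmul_nadd_le {a a' b b' : Ordinal} (ha : a' ≤ a) (hb : b' ≤ b) :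
    a' ⨳ b ♯ a ⨳ b' ≤ a ⨳ b ♯ a' ⨳ b' := by
  rcases ha.lt_or_eq with ha | rfl
  · rcases hb.lt_or_eq with hb | rfl
    · exact (nmul_nadd_lt ha hb).le
    · rw [nadd_comm]
  · rw [nadd_comm]

theorem lt_of_nadd_lt_aux {P Q K X Y : Ordinal} (h : X < Y) (e1 : P ♯ K = X) (e2 : Q ♯ K = Y) :
    P < Q :=
  (nadd_lt_nadd_iff_right K).1 (e1 ▸ e2 ▸ h)

theorem nmul_nadd (a b c : Ordinal) : a ⨳ (b ♯ c) = a ⨳ b ♯ a ⨳ c := by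
  refine le_antisymm (nmul_le_iff.2 fun a' ha d hd => ?_)
    (nadd_le_iff.2 ⟨fun d hd => ?_, fun d hd => ?_⟩)
  · rw [nmul_nadd a' b c]
    rcases lt_nadd_iff.1 hd with ⟨b', hb, hd⟩ | ⟨c', hc, hd⟩
    · have h1 := nmul_nadd_lt ha hb
      have h2 := nmul_nadd_le ha.le hd
      rw [nmul_nadd a' b' c, nmul_nadd a b' c] at h2
      refine lt_of_nadd_lt_aux (nadd_lt_nadd_of_lt_of_le h1 h2) (K := a ⨳ b' ♯ a' ⨳ b') ?_ ?_
      · ac_rfl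
      · ac_rfl
    · have h1 := nmul_nadd_lt ha hc
      have h2 := nmul_nadd_le ha.le hd
      rw [nmul_nadd a' b c', nmul_nadd a b c'] at h2
      refine lt_of_nadd_lt_aux (nadd_lt_nadd_of_lt_of_le h1 h2) (K := a ⨳ c' ♯ a' ⨳ c') ?_ ?_
      · ac_rfl
      · ac_rfl
  · rcases lt_nmul_iff.1 hd with ⟨a', ha, b', hb, hd⟩
    have h2 := nmul_nadd_lt ha (nadd_lt_nadd_right hb c)
    rw [nmul_nadd a' b c, nmul_nadd a b' c, nmul_nadd a' b' c] at h2
    refine lt_of_nadd_lt_aux (nadd_lt_nadd_of_le_of_lt hd h2)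
      (K := a' ⨳ b' ♯ a' ⨳ b ♯ a' ⨳ c ♯ a ⨳ b') ?_ ?_
    · ac_rfl
    · ac_rfl
  · rcases lt_nmul_iff.1 hd with ⟨a', ha, c', hc, hd⟩
    have h2 := nmul_nadd_lt ha (nadd_lt_nadd_left hc b)
    rw [nmul_nadd a' b c, nmul_nadd a b c', nmul_nadd a' b c'] at h2
    refine lt_of_nadd_lt_aux (nadd_lt_nadd_of_le_of_lt hd h2)
      (K := a' ⨳ c' ♯ a' ⨳ c ♯ a' ⨳ b ♯ a ⨳ c') ?_ ?_
    · ac_rfl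
    · ac_rfl
termination_by (a, b, c)

theorem nmul_lt_nmul_of_pos_left {a b c : Ordinal} (h : b < c) (ha : 0 < a) : a ⨳ b < a ⨳ c :=
  lt_nmul_iff.2 ⟨0, ha, b, h, by rw [zero_nmul, zero_nmul, nadd_zero, zero_nadd]⟩

theorem nmul_le_nmul_left {b c : Ordinal} (h : b ≤ c) (a : Ordinal) : a ⨳ b ≤ a ⨳ c := by
  rcases h.lt_or_eq with h | rfl
  · rcases eq_or_ne a 0 with rfl | ha
    · rw [zero_nmul, zero_nmul]
    · exact (nmul_lt_nmul_of_pos_left h (pos_iff_ne_zero.2 ha)).le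
  · exact le_rfl

theorem nadd_one_eq_add_one (x : Ordinal) : x ♯ 1 = x + 1 := by
  rw [nadd_one, Order.succ_eq_add_one]

/-- Associativity of `⨳`, in the case of a natural number as right factor. -/
theorem nmul_assoc (a b : Ordinal) (n : ℕ) : a ⨳ b ⨳ (n : Ordinal) = a ⨳ (b ⨳ (n : Ordinal)) := by
  induction n with
  | zero => rw [Nat.cast_zero, nmul_zero, nmul_zero, nmul_zero]
  | succ n ih =>
      rw [Nat.cast_succ, ← nadd_one_eq_add_one, nmul_nadd, nmul_nadd, nmul_one, nmul_one,
        nmul_nadd, ih]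

/-- `a * n ≤ a ⨳ n` for a natural number `n`. -/
theorem mul_le_nmul (a : Ordinal) (n : ℕ) : a * (n : Ordinal) ≤ a ⨳ (n : Ordinal) := by
  induction n with
  | zero => rw [Nat.cast_zero, nmul_zero, mul_zero]
  | succ n ih =>
      rw [Nat.cast_succ, mul_add_one, ← nadd_one_eq_add_one, nmul_nadd, nmul_one]
      exact (add_le_nadd _ _).trans (nadd_le_nadd_right ih a)

end Ordinal



open NaturalOps

namespace SubdistAux

open Ordinal

theorem nadd_add_le (x y z : Ordinal) : (x ♯ y) + z ≤ x ♯ (y + z) := by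
  induction z using Ordinal.limitRecOn with
  | zero => simp
  | add_one z ih =>
      rw [Ordinal.add_one_eq_succ z, add_succ, add_succ, nadd_succ]
      exact Order.succ_le_succ ih
  | limit z hz ih =>
      exact (add_le_iff_of_isSuccLimit hz).2 fun z' hz' =>
        (ih z' hz').trans (nadd_le_nadd_left (add_le_add_right hz'.le y) x)

theorem nadd_nadd_comm (a b c d : Ordinal) : (a ♯ b) ♯ (c ♯ d) = (a ♯ c) ♯ (b ♯ d) := by
  rw [nadd_assoc, nadd_left_comm b, ← nadd_assoc]

/-- `ω ^ e * q ♯ b = ω ^ e * q + b` for `b < ω ^ e`. -/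
theorem va (e : Ordinal) (hP : ∀ x < ω ^ e, ∀ y < ω ^ e, x ♯ y < ω ^ e) :
    ∀ q : Ordinal, ∀ b < ω ^ e, ω ^ e * q ♯ b = ω ^ e * q + b := by
  have he : (ω : Ordinal) ^ e ≠ 0 := opow_ne_zero e omega0_ne_zero
  intro q
  induction q using Ordinal.induction with
  | _ q IHq =>
  intro b
  induction b using Ordinal.induction with
  | _ b IHb =>
  intro hb
  refine le_antisymm (nadd_le_iff.2 ⟨fun x hx => ?_, fun b' hb' => ?_⟩) (add_le_nadd _ _)
  · have hq1 : x / ω ^ e < q := (Ordinal.div_lt he).2 hx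
    have hx1 : x % ω ^ e < ω ^ e := mod_lt x he
    have hxe : ω ^ e * (x / ω ^ e) + x % ω ^ e = x := Ordinal.div_add_mod x (ω ^ e)
    have h1 : ω ^ e * (x / ω ^ e) ♯ (x % ω ^ e) = x := by
      rw [IHq _ hq1 _ hx1, hxe]
    have h2 : (x % ω ^ e) ♯ b < ω ^ e := hP _ hx1 _ hb
    calc x ♯ b = ω ^ e * (x / ω ^ e) ♯ ((x % ω ^ e) ♯ b) := by
          conv_lhs => rw [← h1]
          rw [nadd_assoc]
      _ = ω ^ e * (x / ω ^ e) + ((x % ω ^ e) ♯ b) := IHq _ hq1 _ h2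
      _ < ω ^ e * (x / ω ^ e) + ω ^ e := add_lt_add_right h2 _
      _ = ω ^ e * Order.succ (x / ω ^ e) := (mul_succ _ _).symm
      _ ≤ ω ^ e * q := mul_le_mul_right (Order.succ_le_of_lt hq1) _
      _ ≤ ω ^ e * q + b := le_self_add
  · rw [IHb b' hb' (hb'.trans hb)]
    exact add_lt_add_right hb' _

/-- `ω ^ e * n ♯ ω ^ e * m = ω ^ e * (n + m)` for naturals `n m`. -/
theorem vb (e : Ordinal) (hP : ∀ x < ω ^ e, ∀ y < ω ^ e, x ♯ y < ω ^ e) :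
    ∀ s n m : ℕ, n + m ≤ s → ω ^ e * n ♯ ω ^ e * m = ω ^ e * ((n : Ordinal) + m) := by
  have he : (ω : Ordinal) ^ e ≠ 0 := opow_ne_zero e omega0_ne_zero
  have hva := va e hP
  intro s
  induction s with
  | zero =>
      intro n m h
      obtain ⟨rfl, rfl⟩ : n = 0 ∧ m = 0 := by omega
      simp [nadd_zero]
  | succ s IH =>
      intro n m hnm
      have key : ∀ n m : ℕ, n + m ≤ s + 1 → ∀ x < ω ^ e * (n : Ordinal),
          x ♯ ω ^ e * (m : Ordinal) < ω ^ e * ((n : Ordinal) + m) := by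
        intro n m hnm x hx
        have hj' : x / ω ^ e < (n : Ordinal) := (Ordinal.div_lt he).2 hx
        obtain ⟨j, hj⟩ := lt_omega0.1 (hj'.trans (nat_lt_omega0 n))
        have hjn : j < n := by exact_mod_cast hj ▸ hj'
        have hx1 : x % ω ^ e < ω ^ e := mod_lt x he
        have h1 : ω ^ e * (j : Ordinal) ♯ (x % ω ^ e) = x := by
          rw [hva _ _ hx1, ← hj, Ordinal.div_add_mod]
        calc x ♯ ω ^ e * (m : Ordinal)
            = (ω ^ e * (j : Ordinal) ♯ ω ^ e * (m : Ordinal)) ♯ (x % ω ^ e) := by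
              conv_lhs => rw [← h1]
              rw [nadd_right_comm]
          _ = ω ^ e * ((j : Ordinal) + m) ♯ (x % ω ^ e) := by
              rw [IH j m (by omega)]
          _ = ω ^ e * ((j : Ordinal) + m) + (x % ω ^ e) := hva _ _ hx1
          _ < ω ^ e * ((j : Ordinal) + m) + ω ^ e := add_lt_add_right hx1 _
          _ = ω ^ e * Order.succ ((j : Ordinal) + m) := (mul_succ _ _).symm
          _ ≤ ω ^ e * ((n : Ordinal) + m) := by
              apply mul_le_mul_right
              rw [Order.succ_eq_add_one]
              exact_mod_cast Nat.cast_le.2 (by omega : j + m + 1 ≤ n + m)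
      refine le_antisymm (nadd_le_iff.2 ⟨fun x hx => key n m hnm x hx, fun y hy => ?_⟩) ?_
      · rw [nadd_comm]
        calc y ♯ ω ^ e * (n : Ordinal) < ω ^ e * ((m : Ordinal) + n) :=
              key m n (by omega) y hy
          _ = ω ^ e * ((n : Ordinal) + m) := by
              norm_cast
              rw [Nat.add_comm]
      · rw [mul_add]
        exact add_le_nadd _ _

/-- `ω ^ e` is closed under natural addition. -/
theorem padd : ∀ e : Ordinal, ∀ x < ω ^ e, ∀ y < ω ^ e, x ♯ y < ω ^ e := by
  intro e
  induction e using Ordinal.induction with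
  | _ e IH =>
  rcases Ordinal.zero_or_succ_or_isSuccLimit e with rfl | ⟨c, rfl⟩ | he
  · intro x hx y hy
    rw [opow_zero] at *
    rw [Ordinal.lt_one_iff_zero] at hx hy
    subst hx; subst hy
    simpa [nadd_zero] using zero_lt_one
  · intro x hx y hy
    have hcc : c < Order.succ c := Order.lt_succ c
    have hP := IH c hcc
    have hva := va c hP
    have he : (ω : Ordinal) ^ c ≠ 0 := opow_ne_zero c omega0_ne_zero
    rw [opow_succ] at hx hy ⊢
    have hm' : x / ω ^ c < ω := (Ordinal.div_lt he).2 hx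
    obtain ⟨m, hm⟩ := lt_omega0.1 hm'
    have hn' : y / ω ^ c < ω := (Ordinal.div_lt he).2 hy
    obtain ⟨n, hn⟩ := lt_omega0.1 hn'
    have hx1 : x % ω ^ c < ω ^ c := mod_lt x he
    have hy1 : y % ω ^ c < ω ^ c := mod_lt y he
    have h1 : ω ^ c * (m : Ordinal) ♯ (x % ω ^ c) = x := by
      rw [hva _ _ hx1, ← hm, Ordinal.div_add_mod]
    have h2 : ω ^ c * (n : Ordinal) ♯ (y % ω ^ c) = y := by
      rw [hva _ _ hy1, ← hn, Ordinal.div_add_mod]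
    have hz : (x % ω ^ c) ♯ (y % ω ^ c) < ω ^ c := hP _ hx1 _ hy1
    calc x ♯ y = (ω ^ c * (m : Ordinal) ♯ ω ^ c * (n : Ordinal)) ♯
          ((x % ω ^ c) ♯ (y % ω ^ c)) := by
          conv_lhs => rw [← h1, ← h2]
          rw [nadd_nadd_comm]
      _ = ω ^ c * ((m : Ordinal) + n) ♯ ((x % ω ^ c) ♯ (y % ω ^ c)) := by
          rw [vb c hP (m + n) m n le_rfl]
      _ = ω ^ c * ((m : Ordinal) + n) + ((x % ω ^ c) ♯ (y % ω ^ c)) := hva _ _ hz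
      _ < ω ^ c * ((m : Ordinal) + n) + ω ^ c := add_lt_add_right hz _
      _ = ω ^ c * Order.succ ((m : Ordinal) + n) := (mul_succ _ _).symm
      _ < ω ^ c * ω := by
          apply mul_lt_mul_of_pos_left _ (opow_pos c omega0_pos)
          rw [Order.succ_eq_add_one]
          exact_mod_cast nat_lt_omega0 (m + n + 1)
  · intro x hx y hy
    have hlx : log ω x < e := by
      rcases eq_or_ne x 0 with rfl | hx0
      · simpa using he.pos
      · by_contra h
        exact absurd ((opow_le_opow_right omega0_pos (not_lt.1 h)).trans
          (opow_log_le_self ω hx0)) hx.not_ge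
    have hly : log ω y < e := by
      rcases eq_or_ne y 0 with rfl | hy0
      · simpa using he.pos
      · by_contra h
        exact absurd ((opow_le_opow_right omega0_pos (not_lt.1 h)).trans
          (opow_log_le_self ω hy0)) hy.not_ge
    set c := Order.succ (max (log ω x) (log ω y)) with hc
    have hce : c < e := he.succ_lt (max_lt hlx hly)
    have hxc : x < ω ^ c :=
      (lt_opow_succ_log_self one_lt_omega0 x).trans_le
        (opow_le_opow_right omega0_pos (Order.succ_le_succ (le_max_left _ _)))
    have hyc : y < ω ^ c :=
      (lt_opow_succ_log_self one_lt_omega0 y).trans_le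
        (opow_le_opow_right omega0_pos (Order.succ_le_succ (le_max_right _ _)))
    exact (IH c hce x hxc y hyc).trans_le (opow_le_opow_right omega0_pos hce.le)

theorem vfull (c : Ordinal) (n : ℕ) {g : Ordinal} (hg : g < ω ^ (c + 1)) :
    ω ^ c * (n : Ordinal) ♯ g = ω ^ c * (n : Ordinal) + g := by
  have he : (ω : Ordinal) ^ c ≠ 0 := opow_ne_zero c omega0_ne_zero
  have hP := padd c
  have hva := va c hP
  rw [Ordinal.add_one_eq_succ, opow_succ] at hg
  have hm' : g / ω ^ c < ω := (Ordinal.div_lt he).2 hg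
  obtain ⟨m, hm⟩ := lt_omega0.1 hm'
  have hg1 : g % ω ^ c < ω ^ c := mod_lt g he
  have h1 : ω ^ c * (m : Ordinal) ♯ (g % ω ^ c) = g := by
    rw [hva _ _ hg1, ← hm, Ordinal.div_add_mod]
  calc ω ^ c * (n : Ordinal) ♯ g
      = (ω ^ c * (n : Ordinal) ♯ ω ^ c * (m : Ordinal)) ♯ (g % ω ^ c) := by
        conv_lhs => rw [← h1]
        rw [nadd_assoc]
    _ = ω ^ c * ((n : Ordinal) + m) ♯ (g % ω ^ c) := by
        rw [vb c hP (n + m) n m le_rfl]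
    _ = ω ^ c * ((n : Ordinal) + m) + (g % ω ^ c) := hva _ _ hg1
    _ = ω ^ c * (n : Ordinal) + (ω ^ c * (m : Ordinal) + g % ω ^ c) := by
        rw [mul_add, add_assoc]
    _ = ω ^ c * (n : Ordinal) + g := by
        rw [← hva _ _ hg1, h1]

theorem absorb {a b : Ordinal} (h : a * ω ≤ b) : a + b = b := by
  have h2 : a + a * ω = a * ω := by
    calc a + a * ω = a * 1 + a * ω := by rw [mul_one]
      _ = a * (1 + ω) := (mul_add _ _ _).symm
      _ = a * ω := by rw [one_add_omega0]
  conv_lhs => rw [← Ordinal.add_sub_cancel_of_le h, ← add_assoc, h2]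
  exact Ordinal.add_sub_cancel_of_le h

theorem nmul_absorb {α b g c : Ordinal} (hb : b < ω ^ c) (hg : ω ^ c ≤ g) :
    α ⨳ b + α ⨳ g = α ⨳ g := by
  apply absorb
  rw [mul_le_iff_of_isSuccLimit isSuccLimit_omega0]
  intro n' hn'
  obtain ⟨n, rfl⟩ := lt_omega0.1 hn'
  have key : ∀ k : ℕ, b ⨳ (k : Ordinal) < ω ^ c := by
    intro k
    induction k with
    | zero => simpa [nmul_zero] using opow_pos c omega0_pos
    | succ k ih =>
        have hcast : ((k + 1 : ℕ) : Ordinal) = (k : Ordinal) ♯ 1 := by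
          rw [nadd_one, Order.succ_eq_add_one, Nat.cast_succ]
        rw [hcast, nmul_nadd, nmul_one]
        exact padd c _ ih _ hb
  calc (α ⨳ b) * (n : Ordinal) ≤ (α ⨳ b) ⨳ (n : Ordinal) := mul_le_nmul _ _
    _ = α ⨳ (b ⨳ (n : Ordinal)) := nmul_assoc _ _ _
    _ ≤ α ⨳ g := nmul_le_nmul_left ((key n).le.trans hg) _

end SubdistAux

open SubdistAux in
/-- Subdistributivity of the natural (Hessenberg) product over the usual ordinal sum:
`(α ⨳ β) + (α ⨳ γ) ≤ α ⨳ (β + γ)`. -/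
theorem nmul_add_nmul_le_nmul_add (α β γ : Ordinal) :
    (α ⨳ β) + (α ⨳ γ) ≤ α ⨳ (β + γ) := by
  open Ordinal in
  rcases eq_or_ne γ 0 with rfl | hγ
  · simp [Ordinal.nmul_zero]
  induction β using Ordinal.induction with
  | _ β IH =>
  set c := Ordinal.log ω γ with hc
  have hγ1 : γ < ω ^ (c + 1) := by
    rw [Ordinal.add_one_eq_succ]
    exact Ordinal.lt_opow_succ_log_self Ordinal.one_lt_omega0 γ
  have hγ2 : ω ^ c ≤ γ := Ordinal.opow_log_le_self ω hγ
  have hec : (Ordinal.omega0) ^ (c + 1) ≠ 0 := Ordinal.opow_ne_zero _ Ordinal.omega0_ne_zero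
  rcases lt_or_ge β (ω ^ (c + 1)) with hβ | hβ
  · have hc0 : (Ordinal.omega0) ^ c ≠ 0 := Ordinal.opow_ne_zero _ Ordinal.omega0_ne_zero
    have hβ' : β < ω ^ c * ω := by
      rwa [Ordinal.add_one_eq_succ, Ordinal.opow_succ] at hβ
    have hn : β / ω ^ c < ω := (Ordinal.div_lt hc0).2 hβ'
    obtain ⟨n, hn'⟩ := Ordinal.lt_omega0.1 hn
    have hbt1 : β % ω ^ c < ω ^ c := Ordinal.mod_lt β hc0
    have hva := va c (padd c)
    have hnadd : ω ^ c * (n : Ordinal) ♯ (β % ω ^ c) = β := by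
      rw [hva _ _ hbt1, ← hn', Ordinal.div_add_mod]
    have habs : α ⨳ (β % ω ^ c) + α ⨳ γ = α ⨳ γ := nmul_absorb hbt1 hγ2
    have habs2 : (β % ω ^ c) + γ = γ := Ordinal.add_absorp hbt1 hγ2
    calc α ⨳ β + α ⨳ γ
        = (α ⨳ (ω ^ c * (n : Ordinal)) ♯ α ⨳ (β % ω ^ c)) + α ⨳ γ := by
          rw [← Ordinal.nmul_nadd, hnadd]
      _ ≤ α ⨳ (ω ^ c * (n : Ordinal)) ♯ (α ⨳ (β % ω ^ c) + α ⨳ γ) := nadd_add_le _ _ _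
      _ = α ⨳ (ω ^ c * (n : Ordinal)) ♯ α ⨳ γ := by rw [habs]
      _ = α ⨳ (ω ^ c * (n : Ordinal) ♯ γ) := (Ordinal.nmul_nadd _ _ _).symm
      _ = α ⨳ (ω ^ c * (n : Ordinal) + γ) := by rw [vfull c n hγ1]
      _ = α ⨳ (β + γ) := by
          rw [show ω ^ c * (n : Ordinal) + γ = β + γ by
            conv_lhs => rw [← habs2]
            rw [← add_assoc, ← hn']
            rw [Ordinal.div_add_mod]]
  · have hr : β % ω ^ (c + 1) < ω ^ (c + 1) := Ordinal.mod_lt β hec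
    have hrβ : β % ω ^ (c + 1) < β := hr.trans_le hβ
    have hsplit : ω ^ (c + 1) * (β / ω ^ (c + 1)) + β % ω ^ (c + 1) = β :=
      Ordinal.div_add_mod β (ω ^ (c + 1))
    have hva := va (c + 1) (padd (c + 1))
    have h1 : ω ^ (c + 1) * (β / ω ^ (c + 1)) ♯ (β % ω ^ (c + 1)) = β := by
      rw [hva _ _ hr]; exact hsplit
    have hrg : β % ω ^ (c + 1) + γ < ω ^ (c + 1) :=
      Ordinal.principal_add_omega0_opow _ hr hγ1
    have h2 : ω ^ (c + 1) * (β / ω ^ (c + 1)) ♯ (β % ω ^ (c + 1) + γ)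
        = ω ^ (c + 1) * (β / ω ^ (c + 1)) + (β % ω ^ (c + 1) + γ) := hva _ _ hrg
    calc α ⨳ β + α ⨳ γ
        = (α ⨳ (ω ^ (c + 1) * (β / ω ^ (c + 1))) ♯ α ⨳ (β % ω ^ (c + 1))) + α ⨳ γ := by
          rw [← Ordinal.nmul_nadd, h1]
      _ ≤ α ⨳ (ω ^ (c + 1) * (β / ω ^ (c + 1))) ♯ (α ⨳ (β % ω ^ (c + 1)) + α ⨳ γ) :=
          nadd_add_le _ _ _
      _ ≤ α ⨳ (ω ^ (c + 1) * (β / ω ^ (c + 1))) ♯ α ⨳ (β % ω ^ (c + 1) + γ) :=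
          nadd_le_nadd_left (IH _ hrβ) _
      _ = α ⨳ (ω ^ (c + 1) * (β / ω ^ (c + 1)) ♯ (β % ω ^ (c + 1) + γ)) :=
          (Ordinal.nmul_nadd _ _ _).symm
      _ = α ⨳ (ω ^ (c + 1) * (β / ω ^ (c + 1)) + (β % ω ^ (c + 1) + γ)) := by rw [h2]
      _ = α ⨳ (β + γ) := by rw [← add_assoc, hsplit]
end

section
/- Let (P, ≤) be a well-founded partial order, p₁ ∈ P and p₂ ∈ P ∪ {∞} with p₁ ≤ p₂, and assume the interval [p₁, p₂) is branching free. Then for each p ∈ [p₁, p₂), rank(p, P) = rank(p₁, P) + rank(P↾[p₁, p)), where + is ordinal addition. Moreover, if p₂ ∈ P, then rank(p₂, P) ≥ rank(p₁, P) + rank(P↾[p₁, p₂)). -/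
universe u

/-- The ordinal rank of an element of a well-founded partial order:
`rank p = sup { rank p' + 1 | p' < p }`. -/
noncomputable def elRank {P : Type u} [PartialOrder P] [WellFoundedLT P] (p : P) :
    Ordinal.{u} :=
  IsWellFounded.rank (α := P) (· < ·) p

/-- The ordinal rank of a well-founded partial order:
`rank P = sup { rank p + 1 | p ∈ P }` (with `sup ∅ = 0`). -/
noncomputable def ordRank (P : Type u) [PartialOrder P] [WellFoundedLT P] : Ordinal.{u} :=
  ⨆ p : P, elRank p + 1

section Aux

variable {P : Type u} [PartialOrder P] [WellFoundedLT P]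

lemma elRank_lt {a b : P} (h : a < b) : elRank a < elRank b :=
  IsWellFounded.rank_lt_of_rel h

lemma elRank_mono {a b : P} (h : a ≤ b) : elRank a ≤ elRank b :=
  h.lt_or_eq.elim (fun h => (elRank_lt h).le) (fun h => by rw [h])

lemma elRank_add_one_le {a b : P} (h : a < b) : elRank a + 1 ≤ elRank b := by
  rw [Ordinal.add_one_eq_succ]
  exact Order.succ_le_of_lt (elRank_lt h)

lemma ordRank_empty {S : Set P} (h : ∀ x, x ∉ S) : ordRank ↥S = 0 := by
  have : IsEmpty ↥S := ⟨fun x => h x.1 x.2⟩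
  rw [ordRank, ciSup_of_empty]
  exact Ordinal.bot_eq_zero

/-- Ranks computed in a subset agree with ranks computed in a superset,
provided the subset is downward closed in the superset. -/
lemma rank_congr {S T : Set P} (hST : S ⊆ T)
    (hdc : ∀ a ∈ T, ∀ b ∈ S, a < b → a ∈ S) :
    ∀ x : P, ∀ hx : x ∈ S,
      IsWellFounded.rank (α := ↥S) (· < ·) ⟨x, hx⟩
        = IsWellFounded.rank (α := ↥T) (· < ·) ⟨x, hST hx⟩ := by
  intro x
  induction x using WellFoundedLT.induction with
  | ind x IH =>
    intro hx
    rw [IsWellFounded.rank_eq, IsWellFounded.rank_eq]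
    apply le_antisymm
    · apply Ordinal.iSup_le
      rintro ⟨⟨b, hbS⟩, hb⟩
      have hbx : b < x := Subtype.mk_lt_mk.1 hb
      calc Order.succ (IsWellFounded.rank (α := ↥S) (· < ·) ⟨b, hbS⟩)
          = Order.succ (IsWellFounded.rank (α := ↥T) (· < ·) ⟨b, hST hbS⟩) := by
            rw [IH b hbx hbS]
        _ ≤ _ := Ordinal.le_iSup _
            (⟨⟨b, hST hbS⟩, Subtype.mk_lt_mk.2 hbx⟩ :
              {b' : ↥T // b' < ⟨x, hST hx⟩})
    · apply Ordinal.iSup_le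
      rintro ⟨⟨b, hbT⟩, hb⟩
      have hbx : b < x := Subtype.mk_lt_mk.1 hb
      have hbS : b ∈ S := hdc b hbT x hx hbx
      calc Order.succ (IsWellFounded.rank (α := ↥T) (· < ·) ⟨b, hbT⟩)
          = Order.succ (IsWellFounded.rank (α := ↥S) (· < ·) ⟨b, hbS⟩) := by
            rw [IH b hbx hbS]
        _ ≤ _ := Ordinal.le_iSup _
            (⟨⟨b, hbS⟩, Subtype.mk_lt_mk.2 hbx⟩ : {b' : ↥S // b' < ⟨x, hx⟩})

/-- The rank of an element of an interval within that interval equals the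
rank of the half-open interval below it. -/
lemma srank_eq (p₁ : P) (b : WithTop P) (x : P) (hx : x ∈ Ival p₁ b) :
    IsWellFounded.rank (α := ↥(Ival p₁ b)) (· < ·) ⟨x, hx⟩
      = ordRank ↥(Ival p₁ (x : WithTop P)) := by
  have hST : Ival p₁ (x : WithTop P) ⊆ Ival p₁ b := fun y hy =>
    ⟨hy.1, lt_trans hy.2 hx.2⟩
  have hdc : ∀ a ∈ Ival p₁ b, ∀ c ∈ Ival p₁ (x : WithTop P), a < c →
      a ∈ Ival p₁ (x : WithTop P) := fun a ha c hc hac =>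
    ⟨ha.1, lt_trans (WithTop.coe_lt_coe.2 hac) hc.2⟩
  rw [IsWellFounded.rank_eq, ordRank]
  simp only [elRank, Ordinal.add_one_eq_succ]
  apply le_antisymm
  · apply Ordinal.iSup_le
    rintro ⟨⟨y, hyT⟩, hy⟩
    have hyx : y < x := Subtype.mk_lt_mk.1 hy
    have hyS : y ∈ Ival p₁ (x : WithTop P) := ⟨hyT.1, WithTop.coe_lt_coe.2 hyx⟩
    calc Order.succ (IsWellFounded.rank (α := ↥(Ival p₁ b)) (· < ·) ⟨y, hyT⟩)
        = Order.succ (IsWellFounded.rank (α := ↥(Ival p₁ (x : WithTop P))) (· < ·)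
            ⟨y, hyS⟩) := by rw [rank_congr hST hdc y hyS]
      _ ≤ _ := Ordinal.le_iSup _ (⟨y, hyS⟩ : ↥(Ival p₁ (x : WithTop P)))
  · apply Ordinal.iSup_le
    rintro ⟨y, hyS⟩
    have hyT : y ∈ Ival p₁ b := hST hyS
    calc Order.succ (IsWellFounded.rank (α := ↥(Ival p₁ (x : WithTop P))) (· < ·) ⟨y, hyS⟩)
        = Order.succ (IsWellFounded.rank (α := ↥(Ival p₁ b)) (· < ·) ⟨y, hyT⟩) := by
          rw [rank_congr hST hdc y hyS]
      _ ≤ _ := Ordinal.le_iSup _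
          (⟨⟨y, hyT⟩, Subtype.mk_lt_mk.2 (WithTop.coe_lt_coe.1 hyS.2)⟩ :
            {b' : ↥(Ival p₁ b) // b' < ⟨x, hx⟩})

lemma ordRank_Ival (p₁ : P) (b : WithTop P) :
    ordRank ↥(Ival p₁ b)
      = ⨆ x : ↥(Ival p₁ b), (ordRank ↥(Ival p₁ ((x : P) : WithTop P)) + 1) := by
  rw [ordRank]
  exact iSup_congr fun x => congrArg (· + 1) (srank_eq p₁ b x.1 x.2)

end Aux

/-- If `[p₁, p₂)` is branching free, then `rank p = rank p₁ + rank (P↾[p₁, p))` for each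
`p ∈ [p₁, p₂)`; moreover if `p₂ ∈ P`, then `rank p₂ ≥ rank p₁ + rank (P↾[p₁, p₂))`. -/
theorem rank_interval_shift {P : Type u} [PartialOrder P] [WellFoundedLT P]
    (p₁ : P) (p₂ : WithTop P) (h₁₂ : (p₁ : WithTop P) ≤ p₂) (hbf : BranchingFree p₁ p₂) :
    (∀ p ∈ Ival p₁ p₂, elRank p = elRank p₁ + ordRank ↥(Ival p₁ (p : WithTop P))) ∧
    (∀ q : P, p₂ = (q : WithTop P) → elRank p₁ + ordRank ↥(Ival p₁ p₂) ≤ elRank q) := by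
  have part1 : ∀ p ∈ Ival p₁ p₂,
      elRank p = elRank p₁ + ordRank ↥(Ival p₁ (p : WithTop P)) := by
    intro p
    induction p using WellFoundedLT.induction with
    | ind p IH =>
      intro hp
      rcases eq_or_lt_of_le hp.1 with heq | hlt
      · subst heq
        rw [ordRank_empty (fun x hx => (LE.le.not_gt hx.1 (WithTop.coe_lt_coe.1 hx.2))), add_zero]
      · have hne : Nonempty ↥(Ival p₁ (p : WithTop P)) :=
          ⟨⟨p₁, le_refl _, WithTop.coe_lt_coe.2 hlt⟩⟩
        have stepA : elRank p = ⨆ x : ↥(Ival p₁ (p : WithTop P)), (elRank (x : P) + 1) := by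
          apply le_antisymm
          · rw [elRank, IsWellFounded.rank_eq]
            apply Ordinal.iSup_le
            rintro ⟨b, hb⟩
            rcases hbf p hp b hb with hle | hge
            · calc Order.succ (IsWellFounded.rank (α := P) (· < ·) b)
                  ≤ Order.succ (elRank p₁) := Order.succ_le_succ (elRank_mono hle)
                _ = elRank p₁ + 1 := (Ordinal.add_one_eq_succ _).symm
                _ ≤ _ := Ordinal.le_iSup _
                    (⟨p₁, le_refl _, WithTop.coe_lt_coe.2 hlt⟩ : ↥(Ival p₁ (p : WithTop P)))
            · calc Order.succ (IsWellFounded.rank (α := P) (· < ·) b)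
                  = elRank b + 1 := (Ordinal.add_one_eq_succ _).symm
                _ ≤ _ := Ordinal.le_iSup _
                    (⟨b, hge, WithTop.coe_lt_coe.2 hb⟩ : ↥(Ival p₁ (p : WithTop P)))
          · apply Ordinal.iSup_le
            rintro ⟨x, hx⟩
            exact elRank_add_one_le (WithTop.coe_lt_coe.1 hx.2)
        have hmem : ∀ x : ↥(Ival p₁ (p : WithTop P)), (x : P) ∈ Ival p₁ p₂ :=
          fun x => ⟨x.2.1, lt_trans x.2.2 hp.2⟩
        rw [stepA,
          iSup_congr (fun x : ↥(Ival p₁ (p : WithTop P)) => by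
            rw [IH x.1 (WithTop.coe_lt_coe.1 x.2.2) (hmem x), add_assoc] :
            ∀ x : ↥(Ival p₁ (p : WithTop P)), elRank (x : P) + 1
              = elRank p₁ + (ordRank ↥(Ival p₁ ((x : P) : WithTop P)) + 1)),
          ← (Ordinal.isNormal_add_right (elRank p₁)).map_iSup,
          ← ordRank_Ival p₁ (p : WithTop P)]
        exact Ordinal.bddAbove_of_small
  refine ⟨part1, ?_⟩
  intro q hq
  rw [hq] at h₁₂ ⊢
  have hq' : p₁ ≤ q := WithTop.coe_le_coe.1 h₁₂
  rcases eq_or_lt_of_le hq' with heq | hlt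
  · subst heq
    rw [ordRank_empty (fun x hx => (LE.le.not_gt hx.1 (WithTop.coe_lt_coe.1 hx.2))), add_zero]
  · have hne : Nonempty ↥(Ival p₁ ((q : P) : WithTop P)) :=
      ⟨⟨p₁, le_refl _, WithTop.coe_lt_coe.2 hlt⟩⟩
    rw [ordRank_Ival p₁ ((q : P) : WithTop P),
      (Ordinal.isNormal_add_right (elRank p₁)).map_iSup]
    apply Ordinal.iSup_le
    intro x
    have hx2 : (x : P) ∈ Ival p₁ p₂ := by rw [hq]; exact x.2
    rw [← add_assoc, ← part1 x.1 hx2]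
    exact elRank_add_one_le (WithTop.coe_lt_coe.1 x.2.2)
    exact Ordinal.bddAbove_of_small
end

section
/- Let (P, ≤) be a well-founded partial order, p₁ ∈ P and p₂ ∈ P ∪ {∞} with p₁ ≤ p₂, and assume the interval [p₁, p₂) is branching free. Then for every p ∈ [p₁, p₂), rank(p, P) < rank(p₁, P) + rank(P↾[p₁, p₂)), where + is ordinal addition. -/
universe u

lemma key_rank_le {P : Type u} [PartialOrder P] [WellFoundedLT P]
    (p₁ : P) (p₂ : WithTop P) (hbf : BranchingFree p₁ p₂) :
    ∀ p, ∀ hp : p ∈ Ival p₁ p₂,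
      elRank p ≤ elRank p₁ + elRank (⟨p, hp⟩ : Ival p₁ p₂) := by
  intro p
  induction p using WellFoundedLT.induction with
  | ind p IH =>
    intro hp
    rw [elRank, IsWellFounded.rank_eq]
    apply Ordinal.iSup_le
    rintro ⟨x, hx⟩
    rcases hbf p hp x hx with hle | hge
    · rcases eq_or_lt_of_le hle with rfl | hlt
      · -- x = p₁, and p₁ < p, so rank of ⟨p⟩ in the interval is ≥ 1
        have hxm : x ∈ Ival x p₂ := ⟨le_refl x, lt_of_le_of_lt (WithTop.coe_le_coe.mpr hp.1) hp.2⟩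
        have hlt2 : elRank (⟨x, hxm⟩ : Ival x p₂) < elRank (⟨p, hp⟩ : Ival x p₂) :=
          IsWellFounded.rank_lt_of_rel (Subtype.mk_lt_mk.mpr hx)
        have h1 : (1 : Ordinal) ≤ elRank (⟨p, hp⟩ : Ival x p₂) :=
          Order.one_le_iff_pos.mpr ((zero_le (a := elRank (⟨x, hxm⟩ : Ival x p₂))).trans_lt hlt2)
        have : Order.succ (IsWellFounded.rank (α := P) (· < ·) x) = elRank x + 1 := by
          simp [elRank]
        rw [this]
        exact add_le_add_right h1 _
      · have h2 : elRank x < elRank p₁ := IsWellFounded.rank_lt_of_rel hlt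
        exact Order.succ_le_of_lt (h2.trans_le le_self_add)
    · have hx2 : x ∈ Ival p₁ p₂ := ⟨hge, lt_trans (WithTop.coe_lt_coe.mpr hx) hp.2⟩
      have hIH := IH x hx hx2
      have hlt2 : elRank (⟨x, hx2⟩ : Ival p₁ p₂) < elRank (⟨p, hp⟩ : Ival p₁ p₂) :=
        IsWellFounded.rank_lt_of_rel (Subtype.mk_lt_mk.mpr hx)
      calc Order.succ (IsWellFounded.rank (α := P) (· < ·) x)
          ≤ Order.succ (elRank p₁ + elRank (⟨x, hx2⟩ : Ival p₁ p₂)) := Order.succ_le_succ hIH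
        _ = elRank p₁ + Order.succ (elRank (⟨x, hx2⟩ : Ival p₁ p₂)) := (Ordinal.add_succ _ _).symm
        _ ≤ elRank p₁ + elRank (⟨p, hp⟩ : Ival p₁ p₂) :=
            add_le_add_right (Order.succ_le_of_lt hlt2) _

/-- If `[p₁, p₂)` is branching free, then for every `p ∈ [p₁, p₂)` we have
`rank p < rank p₁ + rank (P↾[p₁, p₂))`. -/
theorem rank_lt_of_mem_branchingFree {P : Type u} [PartialOrder P] [WellFoundedLT P]
    (p₁ : P) (p₂ : WithTop P) (h₁₂ : (p₁ : WithTop P) ≤ p₂) (hbf : BranchingFree p₁ p₂) :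
    ∀ p ∈ Ival p₁ p₂, elRank p < elRank p₁ + ordRank ↥(Ival p₁ p₂) := by
  intro p hp
  have h1 := key_rank_le p₁ p₂ hbf p hp
  have h2 : elRank (⟨p, hp⟩ : Ival p₁ p₂) + 1 ≤ ordRank ↥(Ival p₁ p₂) :=
    Ordinal.le_iSup (fun q : Ival p₁ p₂ => elRank q + 1) ⟨p, hp⟩
  calc elRank p ≤ elRank p₁ + elRank (⟨p, hp⟩ : Ival p₁ p₂) := h1
    _ < elRank p₁ + (elRank (⟨p, hp⟩ : Ival p₁ p₂) + 1) := by
        exact (add_lt_add_iff_left _).mpr (lt_add_one _)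
    _ ≤ elRank p₁ + ordRank ↥(Ival p₁ p₂) := add_le_add_right h2 _
end

section
/- Let P, P₁, P₂ be wulpos (well-founded upwards linear partial orders). If P is a box-augmentation of (P₁, P₂), then P₁ or P₂ contains no branching node. -/
universe u

/-- `a` is a branching node: there are `b < a` and `c < a` which are incomparable. -/
def IsBranchingNode {P : Type u} [PartialOrder P] (a : P) : Prop :=
  ∃ b c : P, b < a ∧ c < a ∧ ¬ b ≤ c ∧ ¬ c ≤ b

/-- If a wulpo `P` is a box-augmentation of two wulpos `(B₁, B₂)` (witnessed by a bijection
`η : B₁ × B₂ → P` which is an order embedding in each component), then `B₁` or `B₂`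
contains no branching node. -/
theorem boxAugmentation_branching_node {P B₁ B₂ : Type u}
    [PartialOrder P] [PartialOrder B₁] [PartialOrder B₂]
    [WellFoundedLT P] [WellFoundedLT B₁] [WellFoundedLT B₂]
    (hP : UpwardsLinear P) (h₁ : UpwardsLinear B₁) (h₂ : UpwardsLinear B₂)
    (η : B₁ × B₂ ≃ P)
    (hbox₁ : ∀ (d : B₂) (e e' : B₁), e ≤ e' ↔ η (e, d) ≤ η (e', d))
    (hbox₂ : ∀ (d : B₁) (e e' : B₂), e ≤ e' ↔ η (d, e) ≤ η (d, e')) :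
    (∀ a : B₁, ¬ IsBranchingNode a) ∨ (∀ a : B₂, ¬ IsBranchingNode a) := by
  by_contra hcon
  push_neg at hcon
  obtain ⟨⟨a₁, ha₁⟩, ⟨a₂, ha₂⟩⟩ := hcon
  obtain ⟨b₁, c₁, hb₁, hc₁, hbc₁, hcb₁⟩ := ha₁
  obtain ⟨b₂, c₂, hb₂, hc₂, hbc₂, hcb₂⟩ := ha₂
  have lt1 : ∀ (d : B₂) {e e' : B₁}, e < e' → η (e, d) < η (e', d) := by
    intro d e e' h
    refine lt_of_le_of_ne ((hbox₁ d e e').1 h.le) ?_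
    intro he
    exact h.ne (congrArg Prod.fst (η.injective he))
  have lt2 : ∀ (d : B₁) {e e' : B₂}, e < e' → η (d, e) < η (d, e') := by
    intro d e e' h
    refine lt_of_le_of_ne ((hbox₂ d e e').1 h.le) ?_
    intro he
    exact h.ne (congrArg Prod.snd (η.injective he))
  set X := η (a₁, b₂) with hX
  set X' := η (a₁, c₂) with hX'
  set Y := η (b₁, a₂) with hY
  set Y' := η (c₁, a₂) with hY'
  have hXX' : ¬ X ≤ X' ∧ ¬ X' ≤ X :=
    ⟨fun h => hbc₂ ((hbox₂ a₁ b₂ c₂).2 h), fun h => hcb₂ ((hbox₂ a₁ c₂ b₂).2 h)⟩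
  have hYY' : ¬ Y ≤ Y' ∧ ¬ Y' ≤ Y :=
    ⟨fun h => hbc₁ ((hbox₁ a₂ b₁ c₁).2 h), fun h => hcb₁ ((hbox₁ a₂ c₁ b₁).2 h)⟩
  have neXY : X ≠ Y := fun h => hb₁.ne (congrArg Prod.fst (η.injective h)).symm
  have neXY' : X ≠ Y' := fun h => hc₁.ne (congrArg Prod.fst (η.injective h)).symm
  have neX'Y : X' ≠ Y := fun h => hb₁.ne (congrArg Prod.fst (η.injective h)).symm
  have neX'Y' : X' ≠ Y' := fun h => hc₁.ne (congrArg Prod.fst (η.injective h)).symm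
  have cXY : X ≤ Y ∨ Y ≤ X := hP (η (b₁, b₂)) X Y (lt1 b₂ hb₁) (lt2 b₁ hb₂)
  have cXY' : X ≤ Y' ∨ Y' ≤ X := hP (η (c₁, b₂)) X Y' (lt1 b₂ hc₁) (lt2 c₁ hb₂)
  have cX'Y : X' ≤ Y ∨ Y ≤ X' := hP (η (b₁, c₂)) X' Y (lt1 c₂ hb₁) (lt2 b₁ hc₂)
  have cX'Y' : X' ≤ Y' ∨ Y' ≤ X' := hP (η (c₁, c₂)) X' Y' (lt1 c₂ hc₁) (lt2 c₁ hc₂)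
  rcases cXY with hxy | hyx
  · rcases cXY' with h1 | h1
    · rcases hP X Y Y' (hxy.lt_of_ne neXY) (h1.lt_of_ne neXY') with h | h
      exacts [hYY'.1 h, hYY'.2 h]
    · rcases cX'Y' with h2 | h2
      · rcases cX'Y with h3 | h3
        · rcases hP X' Y Y' (h3.lt_of_ne neX'Y) (h2.lt_of_ne neX'Y') with h | h
          exacts [hYY'.1 h, hYY'.2 h]
        · exact hYY'.1 (h3.trans h2)
      · rcases hP Y' X X' (h1.lt_of_ne neXY'.symm) (h2.lt_of_ne neX'Y'.symm) with h | h
        exacts [hXX'.1 h, hXX'.2 h]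
  · rcases cX'Y with h1 | h1
    · exact hXX'.2 (h1.trans hyx)
    · rcases hP Y X X' (hyx.lt_of_ne neXY.symm) (h1.lt_of_ne neX'Y.symm) with h | h
      exacts [hXX'.1 h, hXX'.2 h]
end

section
/- Let P and P₁, …, Pₘ be wulpos (well-founded upwards linear partial orders) such that P is a box-augmentation of (P₁, …, Pₘ) via the bijection η. Let Iᵢ ⊆ Pᵢ be a subset on which the induced order is linear, for each 1 ≤ i ≤ m. Then the suborder of P induced on the image η(I₁ × ⋯ × Iₘ) is linear (hence a well-order). -/
universe u

/-- `η` witnesses that `A` is a box-augmentation of the family `B`: `η` is a bijection from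
`∏ i, B i` to `A` and, for each coordinate `k` and fixed values at the other coordinates,
the map `e ↦ η (update d k e)` is an order embedding of `B k` into `A`. -/
def IsBoxAugmentation {n : ℕ} (A : Type u) [PartialOrder A] (B : Fin n → Type u)
    [∀ i, PartialOrder (B i)] (η : (∀ i, B i) ≃ A) : Prop :=
  ∀ (k : Fin n) (d : ∀ i, B i) (e e' : B k),
    e ≤ e' ↔ η (Function.update d k e) ≤ η (Function.update d k e')

lemma boxAug_mono {n : ℕ} {P : Type u} [PartialOrder P] {B : Fin n → Type u}
    [∀ i, PartialOrder (B i)] (η : (∀ i, B i) ≃ P) (hbox : IsBoxAugmentation P B η)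
    (s : Finset (Fin n)) :
    ∀ f g : (∀ i, B i), (∀ i, f i ≤ g i) → (∀ i ∉ s, f i = g i) → η f ≤ η g := by
  classical
  induction s using Finset.induction_on with
  | empty =>
    intro f g hle heq
    have : f = g := funext fun i => heq i (Finset.notMem_empty i)
    rw [this]
  | @insert a s ha ih =>
    intro f g hle heq
    set f' := Function.update f a (g a) with hf'
    have h1 : η f ≤ η f' := by
      have := (hbox a f (f a) (g a)).mp (hle a)
      rwa [Function.update_eq_self] at this
    refine h1.trans (ih f' g ?_ ?_)
    · intro i
      by_cases h : i = a
      · subst h; simp [hf']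
      · simp [hf', Function.update_of_ne h, hle i]
    · intro i hi
      by_cases h : i = a
      · subst h; simp [hf']
      · have : i ∉ insert a s := by simp [h, hi]
        simp [hf', Function.update_of_ne h, heq i this]

/-- If a wulpo `P` is a box-augmentation of wulpos `(B 0, …, B (n-1))` via `η`, and each
`I i ⊆ B i` is linearly ordered, then the suborder of `P` induced on `η(∏ i, I i)` is
linear (hence, being well-founded, a well-order). -/
theorem boxAugmentation_image_of_chains_isChain {n : ℕ} {P : Type u}
    [PartialOrder P] [WellFoundedLT P] (B : Fin n → Type u) [∀ i, PartialOrder (B i)]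
    [∀ i, WellFoundedLT (B i)] (hP : UpwardsLinear P) (hB : ∀ i, UpwardsLinear (B i))
    (η : (∀ i, B i) ≃ P) (hbox : IsBoxAugmentation P B η)
    (I : ∀ i, Set (B i)) (hI : ∀ i, IsChain (· ≤ ·) (I i)) :
    IsChain (· ≤ ·) (η '' {f | ∀ i, f i ∈ I i}) := by
  classical
  rintro p ⟨f, hf, rfl⟩ q ⟨g, hg, rfl⟩ hne
  have hfg : f ≠ g := fun h => hne (by rw [h])
  have hcomp : ∀ i, f i ≤ g i ∨ g i ≤ f i := by
    intro i
    by_cases h : f i = g i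
    · exact Or.inl (le_of_eq h)
    · exact hI i (hf i) (hg i) h
  set h : ∀ i, B i := fun i => if f i ≤ g i then f i else g i with hh
  have hhf : ∀ i, h i ≤ f i := by
    intro i
    by_cases hc : f i ≤ g i
    · simp [hh, hc]
    · simp only [hh, if_neg hc]
      exact (hcomp i).resolve_left hc
  have hhg : ∀ i, h i ≤ g i := by
    intro i
    by_cases hc : f i ≤ g i
    · simp [hh, hc]
    · simp [hh, hc]
  have h1 : η h ≤ η f := boxAug_mono η hbox Finset.univ h f hhf
    (fun i hi => absurd (Finset.mem_univ i) hi)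
  have h2 : η h ≤ η g := boxAug_mono η hbox Finset.univ h g hhg
    (fun i hi => absurd (Finset.mem_univ i) hi)
  rcases eq_or_lt_of_le h1 with he | h1
  · have : h = f := η.injective he
    left
    exact boxAug_mono η hbox Finset.univ f g (fun i => this ▸ hhg i)
      (fun i hi => absurd (Finset.mem_univ i) hi)
  rcases eq_or_lt_of_le h2 with he | h2
  · have : h = g := η.injective he
    right
    exact boxAug_mono η hbox Finset.univ g f (fun i => this ▸ hhf i)
      (fun i hi => absurd (Finset.mem_univ i) hi)
  exact hP (η h) (η f) (η g) h1 h2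
end

section
/- Let P be a wulpo that is a box-augmentation of wulpos (P₁, …, Pₙ) via the bijection η, and let ≡ be the same-factor equivalence on P. If C ⊆ P is a chain containing elements of k distinct ≡-equivalence classes, then there exist antichains Aᵢ ⊆ Pᵢ (for 1 ≤ i ≤ n) and a chain C' of cardinality k with C' ⊆ η(A₁ × ⋯ × Aₙ). -/
universe u

/-- Two elements lie in the same connected component of the comparability graph. -/
def SameComp {B : Type u} [PartialOrder B] (a b : B) : Prop :=
  Relation.ReflTransGen (fun x y : B => x ≤ y ∨ y ≤ x) a b

lemma sameComp_symm {D : Type u} [PartialOrder D] {a b : D} (h : SameComp a b) : SameComp b a :=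
  by
  unfold SameComp at *
  induction h with
  | refl => exact Relation.ReflTransGen.refl
  | tail _ hbc ih => exact Relation.ReflTransGen.head hbc.symm ih

lemma sameComp_of_le {D : Type u} [PartialOrder D] {a b : D} (h : a ≤ b) : SameComp a b :=
  Relation.ReflTransGen.single (Or.inl h)

/-- In an upwards linear order two elements of the same component have a common upper bound. -/
lemma cub {D : Type u} [PartialOrder D] (hD : UpwardsLinear D) {a b : D} (h : SameComp a b) :
    ∃ z, a ≤ z ∧ b ≤ z := by
  induction h with
  | refl => exact ⟨a, le_refl a, le_refl a⟩
  | @tail b c hab hbc ih =>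
    obtain ⟨z, haz, hbz⟩ := ih
    rcases hbc with hbc | hcb
    · rcases hbz.lt_or_eq with hlt | heq
      · rcases hbc.lt_or_eq with hlt' | heq'
        · rcases hD b z c hlt hlt' with h1 | h1
          · exact ⟨c, haz.trans h1, le_refl c⟩
          · exact ⟨z, haz, h1⟩
        · exact ⟨z, haz, heq' ▸ hbz⟩
      · exact ⟨c, haz.trans (heq ▸ hbc), le_refl c⟩
    · exact ⟨z, haz, hcb.trans hbz⟩

/-- A finite pairwise-same-component set has a common upper bound. -/
lemma mub {D : Type u} [PartialOrder D] (hD : UpwardsLinear D) (T : Finset D)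
    (hT : ∀ x ∈ T, ∀ y ∈ T, SameComp x y) (hne : T.Nonempty) :
    ∃ z, ∀ x ∈ T, x ≤ z := by
  classical
  induction T using Finset.induction_on with
  | empty => exact absurd hne (by simp)
  | @insert a T haT ih =>
    rcases T.eq_empty_or_nonempty with rfl | hTne
    · exact ⟨a, by simp⟩
    · obtain ⟨z, hz⟩ := ih (fun x hx y hy => hT x (Finset.mem_insert_of_mem hx) y
        (Finset.mem_insert_of_mem hy)) hTne
      obtain ⟨y, hy⟩ := hTne
      have hay : SameComp a y := hT a (Finset.mem_insert_self a T) y (Finset.mem_insert_of_mem hy)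
      have haz : SameComp a z := hay.trans (sameComp_of_le (hz y hy))
      obtain ⟨w, haw, hzw⟩ := cub hD haz
      exact ⟨w, fun x hx => by
        rcases Finset.mem_insert.mp hx with rfl | hx
        · exact haw
        · exact (hz x hx).trans hzw⟩

lemma min'_eq_of_eq {α : Type u} [LinearOrder α] {s t : Finset α} (h : s = t)
    (hs : s.Nonempty) : s.min' hs = t.min' (h ▸ hs) := by subst h; rfl

/-- If a wulpo `P` is a box-augmentation of wulpos `(B 0, …, B (n-1))` via `η`, and a chain
`C ⊆ P` contains elements of `k` distinct classes of the same-factor equivalence (elements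
are equivalent when their preimage factors lie in the same connected components), then there
are antichains `A i ⊆ B i` and a chain `C'` of cardinality `k` with
`C' ⊆ η (A 0 × ⋯ × A (n-1))`. -/
theorem chain_of_distinct_sameFactor_classes {n k : ℕ} {P : Type u}
    [PartialOrder P] [WellFoundedLT P] (B : Fin n → Type u) [∀ i, PartialOrder (B i)]
    [∀ i, WellFoundedLT (B i)] (hP : UpwardsLinear P) (hB : ∀ i, UpwardsLinear (B i))
    (η : (∀ i, B i) ≃ P) (hbox : IsBoxAugmentation P B η)
    (C : Set P) (hC : IsChain (· ≤ ·) C)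
    (s : Fin k → P) (hsC : ∀ j, s j ∈ C)
    (hdist : ∀ j j' : Fin k, j ≠ j' →
      ¬ ∀ i, SameComp (η.symm (s j) i) (η.symm (s j') i)) :
    ∃ A : ∀ i, Set (B i), (∀ i, IsAntichain (· ≤ ·) (A i)) ∧
      ∃ C' : Set P, IsChain (· ≤ ·) C' ∧ C' ⊆ η '' {f | ∀ i, f i ∈ A i} ∧
        C'.ncard = k := by
  classical
  have ups : ∀ x u v : P, x ≤ u → x ≤ v → u ≤ v ∨ v ≤ u := by
    intro x u v hu hv
    rcases hu.lt_or_eq with h | h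
    · rcases hv.lt_or_eq with h' | h'
      · exact hP x u v h h'
      · exact Or.inr (h' ▸ hu)
    · exact Or.inl (h ▸ hv)
  have key : ∀ S : Finset (Fin n), ∃ f : Fin k → ∀ i, B i,
      (∀ j j', η (f j) ≤ η (f j') ∨ η (f j') ≤ η (f j)) ∧
      (∀ j i, SameComp (η.symm (s j) i) (f j i)) ∧
      (∀ i ∈ S, ∀ j j', f j i = f j' i ∨ ¬(f j i ≤ f j' i ∨ f j' i ≤ f j i)) := by
    intro S
    induction S using Finset.induction_on with
    | empty =>
      refine ⟨fun j => η.symm (s j), ?_, fun j i => Relation.ReflTransGen.refl, by simp⟩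
      intro j j'
      by_cases h : s j = s j'
      · left; rw [Equiv.apply_symm_apply, Equiv.apply_symm_apply, h]
      · simpa [Equiv.apply_symm_apply] using hC (hsC j) (hsC j') h
    | @insert i S hiS ih =>
      obtain ⟨f, hP1, hP2, hP3⟩ := ih
      -- the set of indices in the same component at coordinate i
      set F : Fin k → Finset (Fin k) :=
        fun j => Finset.univ.filter (fun j' => SameComp (f j' i) (f j i)) with hF
      have hmemF : ∀ j, j ∈ F j := fun j => by
        simp only [hF, Finset.mem_filter, Finset.mem_univ, true_and]
        exact Relation.ReflTransGen.refl
      have hFne : ∀ j, (F j).Nonempty := fun j => ⟨j, hmemF j⟩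
      have hFeq : ∀ j j', SameComp (f j i) (f j' i) → F j = F j' := by
        intro j j' hjj'
        apply Finset.filter_congr
        intro a _
        constructor
        · intro h; exact h.trans hjj'
        · intro h; exact h.trans (sameComp_symm hjj')
      -- representative
      set rep : Fin k → Fin k := fun j => (F j).min' (hFne j) with hrep
      have hrepSame : ∀ j, SameComp (f (rep j) i) (f j i) := by
        intro j
        have hmem : rep j ∈ F j := Finset.min'_mem (F j) (hFne j)
        rw [hF] at hmem
        exact (Finset.mem_filter.mp hmem).2
      have hrepEq : ∀ j j', SameComp (f j i) (f j' i) → rep j = rep j' := by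
        intro j j' h
        simp only [hrep]
        exact min'_eq_of_eq (hFeq j j' h) (hFne j)
      -- common upper bound for each component
      have hub : ∀ j₀ : Fin k, ∃ zz : B i, ∀ j' : Fin k,
          SameComp (f j' i) (f j₀ i) → f j' i ≤ zz := by
        intro j₀
        obtain ⟨z, hz⟩ := mub (hB i) ((F j₀).image (fun j' => f j' i))
          (by
            intro x hx y hy
            simp only [Finset.mem_image, hF, Finset.mem_filter] at hx hy
            obtain ⟨a, ⟨_, ha⟩, rfl⟩ := hx
            obtain ⟨b, ⟨_, hb⟩, rfl⟩ := hy
            exact ha.trans (sameComp_symm hb))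
          (⟨f j₀ i, Finset.mem_image_of_mem _ (hmemF j₀)⟩)
        refine ⟨z, fun j' hj' => hz _ ?_⟩
        refine Finset.mem_image_of_mem _ ?_
        simp [hF, hj']
      set z : Fin k → B i := fun j => (hub (rep j)).choose with hzdef
      have hzspec : ∀ j j' : Fin k, SameComp (f j' i) (f (rep j) i) → f j' i ≤ z j :=
        fun j => (hub (rep j)).choose_spec
      have hlez : ∀ j, f j i ≤ z j := by
        intro j
        exact hzspec j j (sameComp_symm (hrepSame j))
      have hzeq : ∀ j j', SameComp (f j i) (f j' i) → z j = z j' := by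
        intro j j' h
        simp only [hzdef]
        rw [hrepEq j j' h]
      -- the new family
      set g : Fin k → ∀ i', B i' := fun j => Function.update (f j) i (z j) with hg
      have hgi : ∀ j, g j i = z j := fun j => Function.update_self i (z j) (f j)
      have hgother : ∀ j i', i' ≠ i → g j i' = f j i' :=
        fun j i' h => Function.update_of_ne h (z j) (f j)
      have hupg : ∀ j, η (f j) ≤ η (g j) := by
        intro j
        have := (hbox i (f j) (f j i) (z j)).mp (hlez j)
        rwa [Function.update_eq_self] at this
      refine ⟨g, ?_, ?_, ?_⟩
      · intro j j'
        rcases hP1 j j' with h | h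
        · exact ups (η (f j)) _ _ (hupg j) (h.trans (hupg j'))
        · exact (ups (η (f j')) _ _ (hupg j') (h.trans (hupg j))).symm
      · intro j i'
        by_cases h : i' = i
        · subst h
          rw [hgi]
          exact (hP2 j i').trans (sameComp_of_le (hlez j))
        · rw [hgother j i' h]; exact hP2 j i'
      · intro i' hi' j j'
        rcases Finset.mem_insert.mp hi' with rfl | hi'
        · rw [hgi, hgi]
          by_cases h : SameComp (f j i') (f j' i')
          · exact Or.inl (hzeq j j' h)
          · refine Or.inr ?_
            intro hcomp
            apply h
            have h1 : SameComp (f j i') (z j) := sameComp_of_le (hlez j)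
            have h2 : SameComp (f j' i') (z j') := sameComp_of_le (hlez j')
            have h3 : SameComp (z j) (z j') := Relation.ReflTransGen.single hcomp
            exact (h1.trans h3).trans (sameComp_symm h2)
        · have hne : i' ≠ i := fun hcontra => hiS (hcontra ▸ hi')
          rw [hgother j i' hne, hgother j' i' hne]
          exact hP3 i' hi' j j'
  obtain ⟨f, hP1, hP2, hP3⟩ := key Finset.univ
  refine ⟨fun i => Set.range (fun j => f j i), ?_, Set.range (fun j => η (f j)), ?_, ?_, ?_⟩
  · intro i
    rintro x ⟨j, rfl⟩ y ⟨j', rfl⟩ hne hle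
    rcases hP3 i (Finset.mem_univ i) j j' with h | h
    · exact hne h
    · exact h (Or.inl hle)
  · rintro x ⟨j, rfl⟩ y ⟨j', rfl⟩ _
    exact hP1 j j'
  · rintro x ⟨j, rfl⟩
    exact ⟨f j, fun i => ⟨j, rfl⟩, rfl⟩
  · have hinj : Function.Injective (fun j => η (f j)) := by
      intro j j' h
      by_contra hne
      apply hdist j j' hne
      intro i
      have hf : f j = f j' := η.injective h
      exact (hP2 j i).trans (hf ▸ sameComp_symm (hP2 j' i))
    rw [← Set.image_univ, Set.ncard_image_of_injective _ hinj, Set.ncard_univ,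
      Nat.card_eq_fintype_card, Fintype.card_fin]
end

section
/- Let P be a wulpo which is a tamely colorable box-augmentation of partial orders (P₁, …, Pₙ) via the bijection η. Then there exists a constant c ∈ ℕ such that for every choice of antichains Aᵢ ⊆ Pᵢ (for 1 ≤ i ≤ n), every chain contained in η(A₁ × ⋯ × Aₙ) has fewer than c elements. -/
universe u

/-- The box-augmentation `η` is tamely colorable: there are finite colorings
`σ i : B i × B i → C i` such that the tuple of colors of the componentwise preimages
determines the order relation on `A`. -/
def TamelyColorable {n : ℕ} (A : Type u) [PartialOrder A] (B : Fin n → Type u)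
    [∀ i, PartialOrder (B i)] (η : (∀ i, B i) ≃ A) : Prop :=
  ∃ (C : Fin n → Type u) (_ : ∀ i, Finite (C i)) (σ : ∀ i, B i → B i → C i),
    ∀ b b' c c' : ∀ i, B i, (∀ i, σ i (b i) (b' i) = σ i (c i) (c' i)) →
      (η b ≤ η b' ↔ η c ≤ η c')

/-- If a wulpo `P` is a tamely colorable box-augmentation of `(B 0, …, B (n-1))` via `η`,
then there is a constant `c` such that for all antichains `A i ⊆ B i`, every chain contained
in `η (A 0 × ⋯ × A (n-1))` has fewer than `c` elements. -/
theorem tamelyColorable_bound_chain_length {n : ℕ} {P : Type u} [PartialOrder P]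
    [WellFoundedLT P] (B : Fin n → Type u) [∀ i, PartialOrder (B i)]
    (hP : UpwardsLinear P)
    (η : (∀ i, B i) ≃ P) (hbox : IsBoxAugmentation P B η)
    (htame : TamelyColorable P B η) :
    ∃ c : ℕ, ∀ A : ∀ i, Set (B i), (∀ i, IsAntichain (· ≤ ·) (A i)) →
      ∀ L : Set P, IsChain (· ≤ ·) L → L ⊆ η '' {f | ∀ i, f i ∈ A i} →
        L.Finite ∧ L.ncard < c := by
  obtain ⟨C, hC, σ, htame⟩ := htame
  haveI := hC
  refine ⟨Nat.card (∀ i, C i) + 2, ?_⟩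
  intro A hA L hchain hsub
  -- Key injectivity argument
  have key : ∀ b k l : ∀ i, B i, (∀ i, b i ∈ A i) → (∀ i, k i ∈ A i) → (∀ i, l i ∈ A i) →
      η b < η k → η b < η l → (∀ i, σ i (b i) (k i) = σ i (b i) (l i)) → k = l := by
    intro b k l hb hk hl hbk hbl hcol
    funext i
    set d := Function.update k i (l i) with hd
    have hdm : ∀ m, m ≠ i → d m = k m := by
      intro m hm; simp [hd, Function.update_of_ne hm]
    have hdi : d i = l i := by simp [hd]
    have hcd : ∀ m, σ m (b m) (d m) = σ m (b m) (k m) := by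
      intro m
      by_cases hm : m = i
      · subst hm; rw [hdi, ← hcol m]
      · rw [hdm m hm]
    have hled : η b ≤ η d := (htame b d b k hcd).mpr hbk.le
    have hupdk : Function.update k i (k i) = k := Function.update_eq_self i k
    have hne : η b ≠ η d := by
      intro heq
      have hbd : b = d := η.injective heq
      have hupdb : Function.update k i (b i) = b := by
        funext m
        by_cases hm : m = i
        · subst hm; simp
        · rw [Function.update_of_ne hm]
          rw [hbd]; exact (hdm m hm).symm
      have hbi : b i ≤ k i := by
        rw [hbox i k (b i) (k i), hupdb, hupdk]; exact hbk.le
      have hbik : b i = k i := by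
        by_contra hne'
        exact hA i (hb i) (hk i) hne' hbi
      have : b = k := by rw [← hupdb, hbik, hupdk]
      exact hbk.ne (congrArg η this)
    have hltd : η b < η d := lt_of_le_of_ne hled hne
    have hcomp : η d ≤ η k ∨ η k ≤ η d := hP (η b) (η d) (η k) hltd hbk
    have h1 : l i ≤ k i ↔ η d ≤ η k := by
      rw [hbox i k (l i) (k i), hupdk]
    have h2 : k i ≤ l i ↔ η k ≤ η d := by
      rw [hbox i k (k i) (l i), hupdk]
    by_contra hne'
    rcases hcomp with h | h
    · exact hA i (hl i) (hk i) (fun e => hne' e.symm) (h1.mpr h)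
    · exact hA i (hk i) (hl i) hne' (h2.mpr h)
  -- membership of preimages
  have hmem : ∀ y ∈ L, ∀ i, η.symm y i ∈ A i := by
    intro y hy i
    obtain ⟨f, hf, hfy⟩ := hsub hy
    have : f = η.symm y := by rw [← hfy, Equiv.symm_apply_apply]
    rw [← this]; exact hf i
  rcases L.eq_empty_or_nonempty with hL | hL
  · subst hL
    simp
  obtain ⟨x, hxL, hxmin⟩ := (IsWellFounded.wf (r := ((· < ·) : P → P → Prop))).has_min L hL
  have hxle : ∀ y ∈ L, x ≤ y := by
    intro y hy
    by_cases hxy : x = y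
    · exact hxy.le
    rcases hchain hxL hy hxy with h | h
    · exact h
    · exact absurd (lt_of_le_of_ne h (Ne.symm hxy)) (hxmin y hy)
  set F : P → (∀ i, C i) := fun y => fun i => σ i (η.symm x i) (η.symm y i) with hF
  have hinj : Set.InjOn F (L \ {x}) := by
    intro y hy z hz hyz
    have hy' : y ∈ L := hy.1
    have hz' : z ∈ L := hz.1
    have hxy : x < y := lt_of_le_of_ne (hxle y hy') (fun e => hy.2 e.symm)
    have hxz : x < z := lt_of_le_of_ne (hxle z hz') (fun e => hz.2 e.symm)
    have hek : η (η.symm x) < η (η.symm y) := by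
      simpa [Equiv.apply_symm_apply] using hxy
    have hel : η (η.symm x) < η (η.symm z) := by
      simpa [Equiv.apply_symm_apply] using hxz
    have := key (η.symm x) (η.symm y) (η.symm z) (hmem x hxL) (hmem y hy') (hmem z hz')
      hek hel (fun i => congrFun hyz i)
    calc y = η (η.symm y) := (Equiv.apply_symm_apply η y).symm
      _ = η (η.symm z) := by rw [this]
      _ = z := Equiv.apply_symm_apply η z
  have hfin' : (L \ {x}).Finite :=
    Set.Finite.of_finite_image (Set.toFinite _) hinj
  have hsubL : L ⊆ insert x (L \ {x}) := by
    intro y hy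
    by_cases h : y = x
    · rw [h]; exact Set.mem_insert _ _
    · exact Set.mem_insert_of_mem _ ⟨hy, h⟩
  have hfinL : L.Finite := (hfin'.insert x).subset hsubL
  refine ⟨hfinL, ?_⟩
  have hcard1 : (L \ {x}).ncard ≤ Nat.card (∀ i, C i) := by
    have := Set.ncard_le_ncard_of_injOn F (fun a _ => Set.mem_univ (F a)) hinj
      (Set.finite_univ)
    simpa [Set.ncard_univ] using this
  calc L.ncard ≤ (insert x (L \ {x})).ncard :=
        Set.ncard_le_ncard hsubL (hfin'.insert x)
    _ ≤ (L \ {x}).ncard + 1 := Set.ncard_insert_le x _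
    _ ≤ Nat.card (∀ i, C i) + 1 := by omega
    _ < Nat.card (∀ i, C i) + 2 := by omega
end
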